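/- arXiv:1504.04870 — 3 statements merged into one kernel-verified Lean document; each statement's English description precedes it below -/
import Mathlib

section
/- Consider a random walk in changing environment on the path graph ℕ (edges between consecutive integers), where at each time t the conductances C_t : ℕ → (0,∞) are ≥ those at time t-1 (monotone increasing, possibly adaptively depending on the walk's history), and C_t(j) ≤ C_∞(j) for all t, j, where the fixed graph with conductances C_∞ is recurrent, i.e. ∑_{j=0}^∞ 1/C_∞(j) = ∞. Then the walk visits 0 infinitely often almost surely (the walk is recurrent). -/
open MeasureTheory Filter
open scoped Classical

namespace RWCEAux

variable {Ω : Type*} {m0 : MeasurableSpace Ω}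

/-- potential: resistance from 0 to x at time t -/
noncomputable def H (C : ℕ → ℕ → Ω → ℝ) (t x : ℕ) (ω : Ω) : ℝ :=
  ∑ j ∈ Finset.range x, 1 / C t j ω

/-- truncated potential along the walk -/
noncomputable def M (X : ℕ → Ω → ℕ) (C : ℕ → ℕ → Ω → ℝ) (K : ℝ) (t : ℕ) (ω : Ω) : ℝ :=
  min (H C t (X t ω) ω) K

/-- the process `M` stopped at the first time `≥ T` at which the walk is at 0 -/
noncomputable def N (X : ℕ → Ω → ℕ) (C : ℕ → ℕ → Ω → ℝ) (K : ℝ) (T : ℕ) : ℕ → Ω → ℝ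
  | 0 => M X C K T
  | n+1 => fun ω => if ∃ s, T ≤ s ∧ s ≤ T + n ∧ X s ω = 0 then N X C K T n ω
      else M X C K (T + n + 1) ω

variable {X : ℕ → Ω → ℕ} {C : ℕ → ℕ → Ω → ℝ} {K : ℝ} {T : ℕ}

lemma measurable_comp_nat {m : MeasurableSpace Ω} {Y : Ω → ℕ} {F : ℕ → Ω → ℝ}
    (hY : Measurable[m] Y) (hF : ∀ n, Measurable[m] (F n)) :
    Measurable[m] fun ω => F (Y ω) ω := by
  have h : Measurable[m.prod ⊤] fun p : Ω × ℕ => F p.2 p.1 :=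
    measurable_from_prod_countable_left fun n => hF n
  exact h.comp (measurable_id.prodMk hY)

lemma measurable_H {m : MeasurableSpace Ω} (hC : ∀ j, Measurable[m] (C t j)) (x : ℕ) :
    Measurable[m] (H C t x) := by
  apply Finset.measurable_sum
  exact fun j _ => measurable_const.div (hC j)

lemma measurable_M {m : MeasurableSpace Ω} (hX : Measurable[m] (X t))
    (hC : ∀ j, Measurable[m] (C t j)) :
    Measurable[m] (M X C K t) := by
  have : Measurable[m] fun ω => H C t (X t ω) ω :=
    measurable_comp_nat hX (fun x => measurable_H hC x)
  exact this.min measurable_const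

lemma stopped_set_measurable {𝓕 : Filtration ℕ m0} (hXadp : ∀ t, Measurable[𝓕 t] (X t)) (n : ℕ) :
    MeasurableSet[𝓕 (T+n)] {ω | ∃ s, T ≤ s ∧ s ≤ T + n ∧ X s ω = 0} := by
  have : {ω | ∃ s, T ≤ s ∧ s ≤ T + n ∧ X s ω = 0}
      = ⋃ s, {ω | T ≤ s ∧ s ≤ T + n ∧ X s ω = 0} := by
    ext ω; simp [Set.mem_iUnion]
  rw [this]
  refine MeasurableSet.iUnion fun s => ?_
  by_cases hs : T ≤ s ∧ s ≤ T + n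
  · have : {ω | T ≤ s ∧ s ≤ T + n ∧ X s ω = 0} = X s ⁻¹' {0} := by
      ext ω; simp [hs.1, hs.2]
    rw [this]
    exact ((hXadp s).mono (𝓕.mono hs.2) le_rfl) (measurableSet_singleton 0)
  · have : {ω | T ≤ s ∧ s ≤ T + n ∧ X s ω = 0} = ∅ := by
      ext ω; simp only [Set.mem_setOf_eq, Set.mem_empty_iff_false, iff_false]
      rintro ⟨h1, h2, _⟩; exact hs ⟨h1, h2⟩
    rw [this]; exact @MeasurableSet.empty Ω (𝓕 (T+n))

lemma measurable_N {𝓕 : Filtration ℕ m0} (hXadp : ∀ t, Measurable[𝓕 t] (X t))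
    (hCadp : ∀ t j, Measurable[𝓕 t] (C t j)) (n : ℕ) :
    Measurable[𝓕 (T+n)] (N X C K T n) := by
  induction n with
  | zero => exact measurable_M (hXadp T) (hCadp T)
  | succ n ih =>
    have h1 : Measurable[𝓕 (T+n+1)] (N X C K T n) :=
      ih.mono (𝓕.mono (by omega)) le_rfl
    have h2 : Measurable[𝓕 (T+n+1)] (M X C K (T+n+1)) :=
      measurable_M (hXadp _) (hCadp _)
    have hset : MeasurableSet[𝓕 (T+n+1)] {ω | ∃ s, T ≤ s ∧ s ≤ T + n ∧ X s ω = 0} :=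
      (𝓕.mono (by omega)) _ (stopped_set_measurable hXadp n)
    exact Measurable.ite hset h1 h2

lemma N_succ (n : ℕ) (ω : Ω) :
    N X C K T (n+1) ω = if ∃ s, T ≤ s ∧ s ≤ T + n ∧ X s ω = 0 then N X C K T n ω
      else M X C K (T + n + 1) ω := rfl

lemma N_eq_of_not_stopped {ω : Ω} (hω : ∀ s, T ≤ s → X s ω ≠ 0) (n : ℕ) :
    N X C K T n ω = M X C K (T+n) ω := by
  cases n with
  | zero => rfl
  | succ n =>
    rw [N_succ, if_neg]
    · rfl
    · rintro ⟨s, h1, _, h3⟩; exact hω s h1 h3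

lemma N_eq_M_exists (n : ℕ) (ω : Ω) : ∃ s, s ≤ T + n ∧ N X C K T n ω = M X C K s ω := by
  induction n with
  | zero => exact ⟨T, le_rfl, rfl⟩
  | succ n ih =>
    by_cases h : ∃ s, T ≤ s ∧ s ≤ T + n ∧ X s ω = 0
    · obtain ⟨s, hs, hN⟩ := ih
      exact ⟨s, by omega, by rw [N_succ, if_pos h]; exact hN⟩
    · exact ⟨T + n + 1, by omega, by rw [N_succ, if_neg h]⟩

lemma measurableSet_nat_eq {m : MeasurableSpace Ω} {f g : Ω → ℕ}
    (hf : Measurable[m] f) (hg : Measurable[m] g) :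
    MeasurableSet[m] {ω | f ω = g ω} := by
  have : {ω | f ω = g ω} = ⋃ k, f ⁻¹' {k} ∩ g ⁻¹' {k} := by
    ext ω; simp [Set.mem_iUnion]; tauto
  rw [this]
  exact MeasurableSet.iUnion fun k =>
    (hf (measurableSet_singleton k)).inter (hg (measurableSet_singleton k))

lemma jensen_min {a b h K p : ℝ} (hp0 : 0 ≤ p) (hp1 : p ≤ 1) (hK : 0 ≤ K)
    (hh : p * a + (1 - p) * b = h) :
    min a K * p + (min b K - min b K * p) ≤ min h K := by
  have h1 : min a K * p + (min b K - min b K * p) = p * min a K + (1 - p) * min b K := by ring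
  rw [h1, le_min_iff]
  have hp1' : (0:ℝ) ≤ 1 - p := by linarith
  constructor
  · calc p * min a K + (1 - p) * min b K
        ≤ p * a + (1 - p) * b :=
          add_le_add (mul_le_mul_of_nonneg_left (min_le_left _ _) hp0)
            (mul_le_mul_of_nonneg_left (min_le_left _ _) hp1')
      _ = h := hh
  · calc p * min a K + (1 - p) * min b K
        ≤ p * K + (1 - p) * K :=
          add_le_add (mul_le_mul_of_nonneg_left (min_le_right _ _) hp0)
            (mul_le_mul_of_nonneg_left (min_le_right _ _) hp1')
      _ = K := by ring

lemma N_eq_of_not_stopped_le {ω : Ω} (n : ℕ) (hω : ∀ s, T ≤ s → s ≤ T + n → X s ω ≠ 0) :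
    N X C K T n ω = M X C K (T+n) ω := by
  cases n with
  | zero => rfl
  | succ m =>
    rw [N_succ, if_neg]
    · rfl
    · rintro ⟨s, h1, h2, h3⟩; exact hω s h1 (by omega) h3

section Main

variable {μ : Measure Ω} [IsProbabilityMeasure μ] {𝓕 : Filtration ℕ m0}

lemma int_of_bdd {f : Ω → ℝ} {c : ℝ} (hf : AEStronglyMeasurable f μ)
    (h : ∀ᵐ ω ∂μ, |f ω| ≤ c) : Integrable f μ :=
  Integrable.mono' (integrable_const c) hf (by filter_upwards [h] with ω hω; simpa using hω)

lemma condExp_N_le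
    (hXadp : ∀ t, Measurable[𝓕 t] (X t))
    (hCadp : ∀ t j, Measurable[𝓕 t] (C t j))
    (hCpos : ∀ᵐ ω ∂μ, ∀ t j, 0 < C t j ω)
    (hmono : ∀ᵐ ω ∂μ, ∀ t j, C t j ω ≤ C (t + 1) j ω)
    (hnn : ∀ᵐ ω ∂μ, ∀ t, X (t + 1) ω = X t ω + 1 ∨ X (t + 1) ω + 1 = X t ω)
    (hstep : ∀ t,
      μ[(fun ω => if X (t + 1) ω = X t ω + 1 then (1 : ℝ) else 0) | 𝓕 t]
        =ᵐ[μ] fun ω => if X t ω = 0 then 1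
          else C t (X t ω) ω / (C t (X t ω) ω + C t (X t ω - 1) ω))
    (hK : 1 ≤ K) (n : ℕ) :
    μ[N X C K T (n+1) | 𝓕 (T+n)] ≤ᵐ[μ] N X C K T n := by
  set t := T + n with ht
  -- basic a.e. facts
  have hK0 : (0:ℝ) ≤ K := by linarith
  have hHnn : ∀ᵐ ω ∂μ, ∀ s x, 0 ≤ H C s x ω := by
    filter_upwards [hCpos] with ω hω s x
    exact Finset.sum_nonneg fun j _ => one_div_nonneg.mpr (hω s j).le
  -- the key objects
  set D : Set Ω := {ω | ∃ s, T ≤ s ∧ s ≤ T + n ∧ X s ω = 0} with hDdef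
  have hD : MeasurableSet[𝓕 t] D := stopped_set_measurable hXadp n
  set Y : Ω → ℝ := fun ω => if X (t + 1) ω = X t ω + 1 then (1 : ℝ) else 0 with hYdef
  set A : Ω → ℝ := fun ω => min (H C t (X t ω + 1) ω) K with hAdef
  set B : Ω → ℝ := fun ω => min (H C t (X t ω - 1) ω) K with hBdef
  set G : Ω → ℝ := fun ω => min (H C t (X (t+1) ω) ω) K with hGdef
  -- measurability
  have mA : Measurable[𝓕 t] A :=
    measurable_comp_nat (hXadp t) (fun x => (measurable_H (hCadp t) (x+1)).min measurable_const)
  have mB : Measurable[𝓕 t] B :=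
    measurable_comp_nat (hXadp t) (fun x => (measurable_H (hCadp t) (x-1)).min measurable_const)
  have mG : Measurable[𝓕 (t+1)] G :=
    measurable_comp_nat (hXadp (t+1))
      (fun x => ((measurable_H (hCadp t) x).mono (𝓕.mono (by omega)) le_rfl).min measurable_const)
  have mY : Measurable[𝓕 (t+1)] Y := by
    refine Measurable.ite ?_ measurable_const measurable_const
    exact measurableSet_nat_eq (hXadp (t+1))
      (((hXadp t).mono (𝓕.mono (by omega)) le_rfl).add_const 1)
  have mM : ∀ s, Measurable[𝓕 s] (M X C K s) := fun s => measurable_M (hXadp s) (hCadp s)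
  have mN : ∀ k, Measurable[𝓕 (T+k)] (N X C K T k) := measurable_N hXadp hCadp
  -- integrability
  have habs : ∀ {f : Ω → ℝ}, (∀ᵐ ω ∂μ, 0 ≤ f ω ∧ f ω ≤ K) → (∀ᵐ ω ∂μ, |f ω| ≤ K) := by
    intro f h; filter_upwards [h] with ω hω; rw [abs_le]; exact ⟨by linarith [hω.1], hω.2⟩
  have bddA : ∀ᵐ ω ∂μ, |A ω| ≤ K := by
    apply habs; filter_upwards [hHnn] with ω hω
    exact ⟨le_min (hω t _) hK0, min_le_right _ _⟩
  have bddB : ∀ᵐ ω ∂μ, |B ω| ≤ K := by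
    apply habs; filter_upwards [hHnn] with ω hω
    exact ⟨le_min (hω t _) hK0, min_le_right _ _⟩
  have bddG : ∀ᵐ ω ∂μ, |G ω| ≤ K := by
    apply habs; filter_upwards [hHnn] with ω hω
    exact ⟨le_min (hω t _) hK0, min_le_right _ _⟩
  have bddM : ∀ s, ∀ᵐ ω ∂μ, |M X C K s ω| ≤ K := by
    intro s; apply habs; filter_upwards [hHnn] with ω hω
    exact ⟨le_min (hω s _) hK0, min_le_right _ _⟩
  have bddN : ∀ k, ∀ᵐ ω ∂μ, |N X C K T k ω| ≤ K := by
    intro k; filter_upwards [hHnn] with ω hω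
    obtain ⟨s, _, hs⟩ := N_eq_M_exists (X := X) (C := C) (K := K) (T := T) k ω
    rw [hs]
    have h0 : 0 ≤ M X C K s ω := le_min (hω s _) hK0
    have h1 : M X C K s ω ≤ K := min_le_right _ _
    rw [abs_le]; exact ⟨by linarith, h1⟩
  have bddY : ∀ᵐ ω ∂μ, |Y ω| ≤ 1 := by
    refine Eventually.of_forall fun ω => ?_
    by_cases h : X (t+1) ω = X t ω + 1 <;> simp [hYdef, h]
  have intY : Integrable Y μ :=
    int_of_bdd ((mY.mono (𝓕.le _) le_rfl).aestronglyMeasurable) bddY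
  have intA : Integrable A μ :=
    int_of_bdd ((mA.mono (𝓕.le _) le_rfl).aestronglyMeasurable) bddA
  have intB : Integrable B μ :=
    int_of_bdd ((mB.mono (𝓕.le _) le_rfl).aestronglyMeasurable) bddB
  have intG : Integrable G μ :=
    int_of_bdd ((mG.mono (𝓕.le _) le_rfl).aestronglyMeasurable) bddG
  have intM : ∀ s, Integrable (M X C K s) μ := fun s =>
    int_of_bdd (((mM s).mono (𝓕.le _) le_rfl).aestronglyMeasurable) (bddM s)
  have intN : ∀ k, Integrable (N X C K T k) μ := fun k =>
    int_of_bdd (((mN k).mono (𝓕.le _) le_rfl).aestronglyMeasurable) (bddN k)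
  have intAY : Integrable (A * Y) μ := by
    apply int_of_bdd (((mA.mono (𝓕.le _) le_rfl).mul
      (mY.mono (𝓕.le _) le_rfl)).aestronglyMeasurable)
    filter_upwards [bddA, bddY] with ω h1 h2
    calc |(A * Y) ω| = |A ω| * |Y ω| := abs_mul _ _
      _ ≤ K * 1 := mul_le_mul h1 h2 (abs_nonneg _) (le_trans (abs_nonneg _) h1)
      _ = K := mul_one K
  have intBY : Integrable (B * Y) μ := by
    apply int_of_bdd (((mB.mono (𝓕.le _) le_rfl).mul
      (mY.mono (𝓕.le _) le_rfl)).aestronglyMeasurable)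
    filter_upwards [bddB, bddY] with ω h1 h2
    calc |(B * Y) ω| = |B ω| * |Y ω| := abs_mul _ _
      _ ≤ K * 1 := mul_le_mul h1 h2 (abs_nonneg _) (le_trans (abs_nonneg _) h1)
      _ = K := mul_one K
  -- decomposition of N (n+1)
  have hdecomp : N X C K T (n+1) = D.indicator (N X C K T n) + Dᶜ.indicator (M X C K (t+1)) := by
    funext ω
    by_cases h : ω ∈ D
    · simp only [Pi.add_apply, Set.indicator_of_mem h,
        Set.indicator_of_notMem (Set.notMem_compl_iff.mpr h), add_zero]
      rw [N_succ, if_pos (show ∃ s, T ≤ s ∧ s ≤ T + n ∧ X s ω = 0 from h)]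
    · simp only [Pi.add_apply, Set.indicator_of_notMem h,
        Set.indicator_of_mem (Set.mem_compl h), zero_add]
      rw [N_succ, if_neg (show ¬∃ s, T ≤ s ∧ s ≤ T + n ∧ X s ω = 0 from h)]
  -- conditional expectation of the decomposition
  have e1 : μ[N X C K T (n+1) | 𝓕 t]
      =ᵐ[μ] D.indicator (N X C K T n) + Dᶜ.indicator (μ[M X C K (t+1) | 𝓕 t]) := by
    rw [hdecomp]
    refine (condExp_add ((intN n).indicator ((𝓕.le t) _ hD))
      ((intM (t+1)).indicator ((𝓕.le t) _ hD.compl)) _).trans ?_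
    apply EventuallyEq.add
    · exact Filter.EventuallyEq.of_eq (condExp_of_stronglyMeasurable (𝓕.le t)
        (((mN n).indicator hD).stronglyMeasurable) ((intN n).indicator ((𝓕.le t) _ hD)))
    · exact condExp_indicator (intM (t+1)) hD.compl
  -- step 1 : M (t+1) ≤ G a.e.
  have hMG : M X C K (t+1) ≤ᵐ[μ] G := by
    filter_upwards [hCpos, hmono] with ω h1 h2
    apply min_le_min _ le_rfl
    apply Finset.sum_le_sum
    intro j _
    exact one_div_le_one_div_of_le (h1 t j) (h2 t j)
  have c1 : μ[M X C K (t+1) | 𝓕 t] ≤ᵐ[μ] μ[G | 𝓕 t] := condExp_mono (intM (t+1)) intG hMG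
  -- step 2 : G = A*Y + (B - B*Y) a.e.
  have hGeq : G =ᵐ[μ] A * Y + (B - B * Y) := by
    filter_upwards [hnn] with ω hω
    rcases hω t with h | h
    · have hY1 : Y ω = 1 := by simp [hYdef, h]
      simp only [Pi.add_apply, Pi.sub_apply, Pi.mul_apply, hY1, mul_one]
      rw [hGdef, hAdef]
      simp [h]
    · have hY0 : Y ω = 0 := by
        have : X (t+1) ω ≠ X t ω + 1 := by omega
        simp [hYdef, this]
      simp only [Pi.add_apply, Pi.sub_apply, Pi.mul_apply, hY0, mul_zero, sub_zero, zero_add]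
      rw [hGdef, hBdef]
      have : X (t+1) ω = X t ω - 1 := by omega
      simp [this]
  have c2 : μ[G | 𝓕 t] =ᵐ[μ] μ[A * Y + (B - B * Y) | 𝓕 t] := condExp_congr_ae hGeq
  -- step 3 : pull out
  have c3 : μ[A * Y + (B - B * Y) | 𝓕 t]
      =ᵐ[μ] A * μ[Y | 𝓕 t] + (B - B * μ[Y | 𝓕 t]) := by
    refine (condExp_add intAY (intB.sub intBY) _).trans ?_
    refine EventuallyEq.add ?_ ?_
    · exact condExp_mul_of_stronglyMeasurable_left mA.stronglyMeasurable intAY intY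
    · refine (condExp_sub intB intBY _).trans ?_
      refine EventuallyEq.sub ?_ ?_
      · exact Filter.EventuallyEq.of_eq
          (condExp_of_stronglyMeasurable (𝓕.le t) mB.stronglyMeasurable intB)
      · exact condExp_mul_of_stronglyMeasurable_left mB.stronglyMeasurable intBY intY
  -- final pointwise estimate
  have final : ∀ᵐ ω ∂μ, ω ∉ D →
      (A * μ[Y | 𝓕 t] + (B - B * μ[Y | 𝓕 t])) ω ≤ M X C K t ω := by
    filter_upwards [hstep t, hCpos] with ω hp hpos hD'
    have hx0 : X t ω ≠ 0 := fun h => hD' ⟨t, by omega, by omega, h⟩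
    set x := X t ω with hx
    set c1' := C t x ω with hc1
    set c0' := C t (x - 1) ω with hc0
    have hc1p : 0 < c1' := hpos t x
    have hc0p : 0 < c0' := hpos t (x-1)
    have hsum : 0 < c1' + c0' := by linarith
    have hpval : (μ[Y | 𝓕 t]) ω = c1' / (c1' + c0') := by
      rw [hYdef]
      rw [hp]
      simp [hx0]
    simp only [Pi.add_apply, Pi.sub_apply, Pi.mul_apply, hpval]
    have hA : A ω = min (H C t (x+1) ω) K := rfl
    have hB : B ω = min (H C t (x-1) ω) K := rfl
    have hHsucc : H C t (x+1) ω = H C t x ω + 1 / c1' := Finset.sum_range_succ _ x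
    have hHpred : H C t x ω = H C t (x-1) ω + 1 / c0' := by
      conv_lhs => rw [show x = (x-1)+1 by omega]
      exact Finset.sum_range_succ _ (x-1)
    rw [hA, hB]
    apply jensen_min (by positivity) (by
        rw [div_le_one hsum]; linarith) hK0
    rw [hHsucc, hHpred]
    field_simp
    ring
  -- put everything together
  filter_upwards [e1, c1, c2, c3, final] with ω he1 hc1' hc2 hc3 hfinal
  rw [he1]
  by_cases h : ω ∈ D
  · simp only [Pi.add_apply, Set.indicator_of_mem h,
      Set.indicator_of_notMem (Set.notMem_compl_iff.mpr h), add_zero]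
    exact le_rfl
  · simp only [Pi.add_apply, Set.indicator_of_notMem h,
      Set.indicator_of_mem (Set.mem_compl h), zero_add]
    have hNn : N X C K T n ω = M X C K t ω :=
      N_eq_of_not_stopped_le n (fun s h1 h2 h3 => h ⟨s, h1, h2, h3⟩)
    rw [hNn]
    calc (μ[M X C K (t+1) | 𝓕 t]) ω ≤ (μ[G | 𝓕 t]) ω := hc1'
      _ = (μ[A * Y + (B - B * Y) | 𝓕 t]) ω := hc2
      _ = (A * μ[Y | 𝓕 t] + (B - B * μ[Y | 𝓕 t])) ω := hc3
      _ ≤ M X C K t ω := hfinal h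

/-- shifted filtration -/
def shift (𝓕 : Filtration ℕ m0) (T : ℕ) : Filtration ℕ m0 where
  seq := fun n => 𝓕 (T + n)
  mono' := fun i j hij => 𝓕.mono (by omega)
  le' := fun i => 𝓕.le _

lemma supermartingale_N
    (hXadp : ∀ t, Measurable[𝓕 t] (X t))
    (hCadp : ∀ t j, Measurable[𝓕 t] (C t j))
    (hCpos : ∀ᵐ ω ∂μ, ∀ t j, 0 < C t j ω)
    (hmono : ∀ᵐ ω ∂μ, ∀ t j, C t j ω ≤ C (t + 1) j ω)
    (hnn : ∀ᵐ ω ∂μ, ∀ t, X (t + 1) ω = X t ω + 1 ∨ X (t + 1) ω + 1 = X t ω)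
    (hstep : ∀ t,
      μ[(fun ω => if X (t + 1) ω = X t ω + 1 then (1 : ℝ) else 0) | 𝓕 t]
        =ᵐ[μ] fun ω => if X t ω = 0 then 1
          else C t (X t ω) ω / (C t (X t ω) ω + C t (X t ω - 1) ω))
    (hK : 1 ≤ K) (T : ℕ) :
    Supermartingale (N X C K T) (shift 𝓕 T) μ := by
  have hK0 : (0:ℝ) ≤ K := by linarith
  have hHnn : ∀ᵐ ω ∂μ, ∀ s x, 0 ≤ H C s x ω := by
    filter_upwards [hCpos] with ω hω s x
    exact Finset.sum_nonneg fun j _ => one_div_nonneg.mpr (hω s j).le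
  have bddN : ∀ k, ∀ᵐ ω ∂μ, |N X C K T k ω| ≤ K := by
    intro k; filter_upwards [hHnn] with ω hω
    obtain ⟨s, _, hs⟩ := N_eq_M_exists (X := X) (C := C) (K := K) (T := T) k ω
    rw [hs]
    have h0 : 0 ≤ M X C K s ω := le_min (hω s _) hK0
    have h1 : M X C K s ω ≤ K := min_le_right _ _
    rw [abs_le]; exact ⟨by linarith, h1⟩
  have mN : ∀ k, Measurable[𝓕 (T+k)] (N X C K T k) := measurable_N hXadp hCadp
  have intN : ∀ k, Integrable (N X C K T k) μ := fun k =>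
    int_of_bdd (((mN k).mono (𝓕.le _) le_rfl).aestronglyMeasurable) (bddN k)
  refine supermartingale_nat (fun n => ((mN n).stronglyMeasurable)) intN ?_
  intro n
  exact condExp_N_le hXadp hCadp hCpos hmono hnn hstep hK n

lemma integral_N_le
    (hXadp : ∀ t, Measurable[𝓕 t] (X t))
    (hCadp : ∀ t j, Measurable[𝓕 t] (C t j))
    (hCpos : ∀ᵐ ω ∂μ, ∀ t j, 0 < C t j ω)
    (hmono : ∀ᵐ ω ∂μ, ∀ t j, C t j ω ≤ C (t + 1) j ω)
    (hnn : ∀ᵐ ω ∂μ, ∀ t, X (t + 1) ω = X t ω + 1 ∨ X (t + 1) ω + 1 = X t ω)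
    (hstep : ∀ t,
      μ[(fun ω => if X (t + 1) ω = X t ω + 1 then (1 : ℝ) else 0) | 𝓕 t]
        =ᵐ[μ] fun ω => if X t ω = 0 then 1
          else C t (X t ω) ω / (C t (X t ω) ω + C t (X t ω - 1) ω))
    (hK : 1 ≤ K) (T n : ℕ) :
    ∫ ω, N X C K T n ω ∂μ ≤ ∫ ω, N X C K T 0 ω ∂μ := by
  have hsup := supermartingale_N hXadp hCadp hCpos hmono hnn hstep hK T
  induction n with
  | zero => exact le_rfl
  | succ n ih =>
    refine le_trans ?_ ih
    have h1 := condExp_N_le (μ := μ) (𝓕 := 𝓕) hXadp hCadp hCpos hmono hnn hstep hK (T := T) n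
    have h2 : ∫ ω, (μ[N X C K T (n+1) | 𝓕 (T+n)]) ω ∂μ = ∫ ω, N X C K T (n+1) ω ∂μ :=
      integral_condExp (𝓕.le _)
    rw [← h2]
    exact integral_mono_ae integrable_condExp (hsup.integrable n) h1

lemma exists_frequent_level {u : ℕ → ℕ} (h : ¬ Tendsto u atTop atTop) :
    ∃ L, (∃ᶠ t in atTop, u t = L) ∧ (∀ᶠ t in atTop, L ≤ u t) := by
  rw [tendsto_atTop_atTop] at h
  push_neg at h
  obtain ⟨b, hb⟩ := h
  have hex : ∃ v, {t | u t = v}.Infinite := by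
    by_contra hc
    push_neg at hc
    have hsub : {t | u t < b} ⊆ ⋃ v ∈ Finset.range b, {t | u t = v} := by
      intro t ht
      simp only [Set.mem_iUnion, Finset.mem_range, Set.mem_setOf_eq]
      exact ⟨u t, ht, rfl⟩
    have hfin : ({t | u t < b}).Finite :=
      Set.Finite.subset (Set.Finite.biUnion (Finset.range b).finite_toSet fun v _ => hc v) hsub
    rw [← Set.not_infinite] at hfin
    apply hfin
    rw [← Nat.frequently_atTop_iff_infinite, frequently_atTop]
    intro a; obtain ⟨n, hn, hn'⟩ := hb a; exact ⟨n, hn, hn'⟩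
  classical
  set L := Nat.find hex with hL
  refine ⟨L, ?_, ?_⟩
  · rw [Nat.frequently_atTop_iff_infinite]
    exact Nat.find_spec hex
  · have hfin : {t | u t < L}.Finite := by
      have hsub : {t | u t < L} ⊆ ⋃ v ∈ Finset.range L, {t | u t = v} := by
        intro t ht
        simp only [Set.mem_iUnion, Finset.mem_range, Set.mem_setOf_eq]
        exact ⟨u t, ht, rfl⟩
      refine Set.Finite.subset (Set.Finite.biUnion (Finset.range L).finite_toSet fun v hv => ?_)
        hsub
      have h1 : v < L := Finset.mem_range.mp hv
      rw [hL] at h1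
      have := Nat.find_min hex h1
      rwa [Set.not_infinite] at this
    obtain ⟨m, hm⟩ := hfin.bddAbove
    rw [eventually_atTop]
    refine ⟨m + 1, fun t ht => ?_⟩
    by_contra hlt
    have : t ≤ m := hm (by simp only [Set.mem_setOf_eq]; omega)
    omega

lemma bddN_ae (hCpos : ∀ᵐ ω ∂μ, ∀ t j, 0 < C t j ω) (hK0 : 0 ≤ K) (k : ℕ) :
    ∀ᵐ ω ∂μ, 0 ≤ N X C K T k ω ∧ N X C K T k ω ≤ K := by
  filter_upwards [hCpos] with ω hω
  obtain ⟨s, _, hs⟩ := N_eq_M_exists (X := X) (C := C) (K := K) (T := T) k ω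
  rw [hs]
  have hH : 0 ≤ H C s (X s ω) ω :=
    Finset.sum_nonneg fun j _ => one_div_nonneg.mpr (hω s j).le
  exact ⟨le_min hH hK0, min_le_right _ _⟩

lemma N_tendsto_ae
    (hXadp : ∀ t, Measurable[𝓕 t] (X t))
    (hCadp : ∀ t j, Measurable[𝓕 t] (C t j))
    (hCpos : ∀ᵐ ω ∂μ, ∀ t j, 0 < C t j ω)
    (hmono : ∀ᵐ ω ∂μ, ∀ t j, C t j ω ≤ C (t + 1) j ω)
    (hnn : ∀ᵐ ω ∂μ, ∀ t, X (t + 1) ω = X t ω + 1 ∨ X (t + 1) ω + 1 = X t ω)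
    (hstep : ∀ t,
      μ[(fun ω => if X (t + 1) ω = X t ω + 1 then (1 : ℝ) else 0) | 𝓕 t]
        =ᵐ[μ] fun ω => if X t ω = 0 then 1
          else C t (X t ω) ω / (C t (X t ω) ω + C t (X t ω - 1) ω))
    (hK : 1 ≤ K) (T : ℕ) :
    ∀ᵐ ω ∂μ, ∃ c, Tendsto (fun n => N X C K T n ω) atTop (nhds c) := by
  have hK0 : (0:ℝ) ≤ K := by linarith
  have hsup := supermartingale_N hXadp hCadp hCpos hmono hnn hstep hK T
  have hbdd : ∀ n, eLpNorm ((-(N X C K T)) n) 1 μ ≤ ENNReal.ofReal K := by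
    intro n
    refine le_trans (eLpNorm_le_of_ae_bound (C := K) ?_) ?_
    · filter_upwards [bddN_ae (T := T) hCpos hK0 n] with ω hω
      simp only [Pi.neg_apply, norm_neg, Real.norm_eq_abs, abs_le]
      exact ⟨by linarith [hω.1], hω.2⟩
    · simp [measure_univ]
  filter_upwards [hsup.neg.exists_ae_tendsto_of_bdd hbdd] with ω hω
  obtain ⟨c, hc⟩ := hω
  refine ⟨-c, ?_⟩
  have := hc.neg
  simpa using this

lemma oscillation {Cinf : ℕ → ℝ} {ω : Ω} {T : ℕ}
    (hpos : ∀ t j, 0 < C t j ω) (hmon : ∀ t j, C t j ω ≤ C (t+1) j ω)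
    (hbd : ∀ t j, C t j ω ≤ Cinf j) (hCinfpos : ∀ j, 0 < Cinf j)
    (hsteps : ∀ t, X (t+1) ω = X t ω + 1 ∨ X (t+1) ω + 1 = X t ω)
    (hne : ∀ s, T ≤ s → X s ω ≠ 0)
    (hnotto : ¬ Tendsto (fun t => X t ω) atTop atTop)
    (hconv : ∀ K : ℕ, 1 ≤ K → ∃ c, Tendsto (fun n => N X C (K:ℝ) T n ω) atTop (nhds c)) :
    False := by
  obtain ⟨L, hfreq, hev⟩ := exists_frequent_level hnotto
  obtain ⟨K, hK⟩ := exists_nat_ge (max 1 (H C T (L+1) ω))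
  have hK1 : (1:ℝ) ≤ K := le_trans (le_max_left _ _) hK
  have hKH : H C T (L+1) ω ≤ K := le_trans (le_max_right _ _) hK
  have hK1' : 1 ≤ K := by exact_mod_cast hK1
  obtain ⟨c, hc⟩ := hconv K hK1'
  have hCmono : ∀ j, Monotone fun t => C t j ω := fun j =>
    monotone_nat_of_le_succ fun t => hmon t j
  have hHanti : ∀ x, Antitone fun t => H C t x ω := by
    intro x t t' htt'
    apply Finset.sum_le_sum
    intro j _
    exact one_div_le_one_div_of_le (hpos t j) (hCmono j htt')
  have hHx : ∀ s x y, x ≤ y → H C s x ω ≤ H C s y ω := by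
    intro s x y hxy
    apply Finset.sum_le_sum_of_subset_of_nonneg (by simpa using hxy)
    intro j _ _; exact one_div_nonneg.mpr (hpos s j).le
  have hHnn : ∀ s x, 0 ≤ H C s x ω := fun s x =>
    Finset.sum_nonneg fun j _ => one_div_nonneg.mpr (hpos s j).le
  have hbdd : BddBelow (Set.range fun s => H C s L ω) := by
    refine ⟨0, ?_⟩
    rintro y ⟨s, rfl⟩
    exact hHnn s L
  have hd := tendsto_atTop_ciInf (hHanti L) hbdd
  set d := ⨅ s, H C s L ω with hdd
  set δ := 1 / Cinf L with hδ
  have hδpos : 0 < δ := one_div_pos.mpr (hCinfpos L)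
  rw [Metric.tendsto_atTop] at hc hd
  obtain ⟨N0, hN0⟩ := hc (δ/4) (by linarith)
  obtain ⟨N1, hN1⟩ := hd (δ/4) (by linarith)
  obtain ⟨N2, hN2⟩ := eventually_atTop.mp hev
  obtain ⟨t, ht, hXt⟩ := (frequently_atTop.mp hfreq) (T + N0 + N1 + N2)
  have htT : T ≤ t := by omega
  have hXt1 : X (t+1) ω = L + 1 := by
    rcases hsteps t with h | h
    · omega
    · have := hN2 (t+1) (by omega)
      omega
  have hNn : ∀ n, N X C (K:ℝ) T n ω = M X C (K:ℝ) (T+n) ω :=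
    N_eq_of_not_stopped hne
  set n := t - T with hn
  have hTn : T + n = t := by omega
  have hHtL1 : H C t (L+1) ω ≤ K := le_trans (hHanti (L+1) htT) hKH
  have hHt1L1 : H C (t+1) (L+1) ω ≤ K := le_trans (hHanti (L+1) (by omega : T ≤ t+1)) hKH
  have hNv : N X C (K:ℝ) T n ω = H C t L ω := by
    rw [hNn n, hTn]
    show min (H C t (X t ω) ω) (K:ℝ) = H C t L ω
    rw [hXt]
    exact min_eq_left (le_trans (hHx t L (L+1) (by omega)) hHtL1)
  have hNv1 : N X C (K:ℝ) T (n+1) ω = H C (t+1) (L+1) ω := by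
    rw [hNn (n+1), show T + (n+1) = t + 1 by omega]
    show min (H C (t+1) (X (t+1) ω) ω) (K:ℝ) = H C (t+1) (L+1) ω
    rw [hXt1]
    exact min_eq_left hHt1L1
  have h1 : H C (t+1) (L+1) ω = H C (t+1) L ω + 1 / C (t+1) L ω := Finset.sum_range_succ _ L
  have h2 : δ ≤ 1 / C (t+1) L ω := by
    rw [hδ]
    exact one_div_le_one_div_of_le (hpos (t+1) L) (hbd (t+1) L)
  have e1 := hN0 n (by omega)
  have e2 := hN0 (n+1) (by omega)
  have e3 := hN1 t (by omega)
  have e4 := hN1 (t+1) (by omega)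
  rw [Real.dist_eq] at e1 e2 e3 e4
  rw [hNv] at e1
  rw [hNv1] at e2
  have f1 := abs_lt.mp e1
  have f2 := abs_lt.mp e2
  have f3 := abs_lt.mp e3
  have f4 := abs_lt.mp e4
  linarith [f1.1, f1.2, f2.1, f2.2, f3.1, f3.2, f4.1, f4.2]

lemma escape_null
    (hXadp : ∀ t, Measurable[𝓕 t] (X t))
    (hCadp : ∀ t j, Measurable[𝓕 t] (C t j))
    (hCpos : ∀ᵐ ω ∂μ, ∀ t j, 0 < C t j ω)
    (hmono : ∀ᵐ ω ∂μ, ∀ t j, C t j ω ≤ C (t + 1) j ω)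
    {Cinf : ℕ → ℝ} (hCinfpos : ∀ j, 0 < Cinf j)
    (hbound : ∀ᵐ ω ∂μ, ∀ t j, C t j ω ≤ Cinf j)
    (hrec : ¬ Summable (fun j => 1 / Cinf j))
    (hnn : ∀ᵐ ω ∂μ, ∀ t, X (t + 1) ω = X t ω + 1 ∨ X (t + 1) ω + 1 = X t ω)
    (hstep : ∀ t,
      μ[(fun ω => if X (t + 1) ω = X t ω + 1 then (1 : ℝ) else 0) | 𝓕 t]
        =ᵐ[μ] fun ω => if X t ω = 0 then 1
          else C t (X t ω) ω / (C t (X t ω) ω + C t (X t ω - 1) ω))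
    (T : ℕ) :
    μ {ω | (∀ s, T ≤ s → X s ω ≠ 0) ∧ Tendsto (fun t => X t ω) atTop atTop} = 0 := by
  set B := {ω | (∀ s, T ≤ s → X s ω ≠ 0) ∧ Tendsto (fun t => X t ω) atTop atTop} with hBdef
  -- B is measurable
  have hBmeas : MeasurableSet B := by
    have hBeq : B = {ω | ∀ s, T ≤ s → X s ω ≠ 0}
        ∩ {ω | Tendsto (fun t => X t ω) atTop atTop} := by
      ext ω; simp only [hBdef, Set.mem_setOf_eq, Set.mem_inter_iff]
    rw [hBeq]
    apply MeasurableSet.inter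
    · have : {ω | ∀ s, T ≤ s → X s ω ≠ 0} = ⋂ s, {ω | T ≤ s → X s ω ≠ 0} := by
        ext ω; simp
      rw [this]
      refine MeasurableSet.iInter fun s => ?_
      by_cases hs : T ≤ s
      · have : {ω | T ≤ s → X s ω ≠ 0} = (X s ⁻¹' {0})ᶜ := by
          ext ω; simp [hs]
        rw [this]
        exact (((hXadp s).mono (𝓕.le s) le_rfl) (measurableSet_singleton 0)).compl
      · have : {ω | T ≤ s → X s ω ≠ 0} = Set.univ := by
          ext ω; simp [hs]
        rw [this]; exact MeasurableSet.univ
    · have : {ω | Tendsto (fun t => X t ω) atTop atTop}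
          = ⋂ b, ⋃ N, ⋂ (t) (_ : N ≤ t), {ω | b ≤ X t ω} := by
        ext ω
        simp only [Set.mem_setOf_eq, Set.mem_iInter, Set.mem_iUnion, tendsto_atTop_atTop]
      rw [this]
      refine MeasurableSet.iInter fun b => MeasurableSet.iUnion fun N =>
        MeasurableSet.iInter fun t => MeasurableSet.iInter fun _ => ?_
      have : {ω | b ≤ X t ω} = X t ⁻¹' (Set.Ici b) := rfl
      rw [this]
      exact ((hXadp t).mono (𝓕.le t) le_rfl) (by trivial)
  -- the lower potential tends to infinity
  have hHlow : Tendsto (fun x => ∑ j ∈ Finset.range x, 1 / Cinf j) atTop atTop :=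
    (not_summable_iff_tendsto_nat_atTop_of_nonneg
      (fun j => one_div_nonneg.mpr (hCinfpos j).le)).mp hrec
  -- key estimate for each K
  have key : ∀ K : ℕ, 1 ≤ K →
      (K:ℝ) * (μ B).toReal ≤ ∫ ω, min (H C T (X T ω) ω) (K:ℝ) ∂μ := by
    intro K hK
    have hK1 : (1:ℝ) ≤ (K:ℝ) := by exact_mod_cast hK
    have hK0 : (0:ℝ) ≤ K := by linarith
    -- a.e. on B the process N eventually equals K
    have hevK : ∀ᵐ ω ∂μ, ω ∈ B → ∀ᶠ n in atTop, N X C (K:ℝ) T n ω = K := by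
      filter_upwards [hCpos, hbound] with ω h1 h2 hB
      have hne : ∀ s, T ≤ s → X s ω ≠ 0 := hB.1
      have hNM : ∀ n, N X C (K:ℝ) T n ω = M X C (K:ℝ) (T+n) ω :=
        N_eq_of_not_stopped hne
      have hHK : ∀ s x, (∑ j ∈ Finset.range x, 1 / Cinf j) ≤ H C s x ω := by
        intro s x
        apply Finset.sum_le_sum
        intro j _
        exact one_div_le_one_div_of_le (h1 s j) (h2 s j)
      have hcomp : Tendsto (fun t => ∑ j ∈ Finset.range (X t ω), 1 / Cinf j) atTop atTop :=
        hHlow.comp hB.2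
      have hev : ∀ᶠ t in atTop, (K:ℝ) ≤ ∑ j ∈ Finset.range (X t ω), 1 / Cinf j :=
        hcomp.eventually_ge_atTop (K:ℝ)
      obtain ⟨N1, hN1⟩ := eventually_atTop.mp hev
      rw [eventually_atTop]
      refine ⟨N1, fun n hn => ?_⟩
      rw [hNM n]
      show min (H C (T+n) (X (T+n) ω) ω) (K:ℝ) = K
      apply min_eq_right
      exact le_trans (hN1 (T+n) (by omega)) (hHK (T+n) (X (T+n) ω))
    -- measurability and integrability of N
    have mN : ∀ k, Measurable[𝓕 (T+k)] (N X C (K:ℝ) T k) := measurable_N hXadp hCadp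
    have intN : ∀ k, Integrable (N X C (K:ℝ) T k) μ := by
      intro k
      refine int_of_bdd (c := (K:ℝ)) (((mN k).mono (𝓕.le _) le_rfl).aestronglyMeasurable) ?_
      filter_upwards [bddN_ae (T := T) hCpos hK0 k] with ω hω
      rw [abs_le]; exact ⟨by linarith [hω.1], hω.2⟩
    -- the ENNReal chain
    have step1 : ENNReal.ofReal K * μ B = ∫⁻ ω in B, ENNReal.ofReal K ∂μ := by
      rw [setLIntegral_const]
    have step2 : ∫⁻ ω in B, ENNReal.ofReal K ∂μ
        ≤ ∫⁻ ω in B, liminf (fun n => ENNReal.ofReal (N X C (K:ℝ) T n ω)) atTop ∂μ := by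
      refine lintegral_mono_ae ?_
      rw [ae_restrict_iff' hBmeas]
      filter_upwards [hevK] with ω hω hB
      have : ∀ᶠ n in atTop, ENNReal.ofReal (N X C (K:ℝ) T n ω) = ENNReal.ofReal K := by
        filter_upwards [hω hB] with n hn; rw [hn]
      rw [liminf_congr this, liminf_const]
    have step3 : ∫⁻ ω in B, liminf (fun n => ENNReal.ofReal (N X C (K:ℝ) T n ω)) atTop ∂μ
        ≤ ∫⁻ ω, liminf (fun n => ENNReal.ofReal (N X C (K:ℝ) T n ω)) atTop ∂μ :=
      setLIntegral_le_lintegral _ _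
    have step4 : ∫⁻ ω, liminf (fun n => ENNReal.ofReal (N X C (K:ℝ) T n ω)) atTop ∂μ
        ≤ liminf (fun n => ∫⁻ ω, ENNReal.ofReal (N X C (K:ℝ) T n ω) ∂μ) atTop :=
      lintegral_liminf_le fun n =>
        ENNReal.measurable_ofReal.comp ((mN n).mono (𝓕.le _) le_rfl)
    have step5 : ∀ n, ∫⁻ ω, ENNReal.ofReal (N X C (K:ℝ) T n ω) ∂μ
        = ENNReal.ofReal (∫ ω, N X C (K:ℝ) T n ω ∂μ) := by
      intro n
      rw [← ofReal_integral_eq_lintegral_ofReal (intN n)]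
      filter_upwards [bddN_ae (T := T) hCpos hK0 n] with ω hω
      exact hω.1
    have step6 : liminf (fun n => ∫⁻ ω, ENNReal.ofReal (N X C (K:ℝ) T n ω) ∂μ) atTop
        ≤ ENNReal.ofReal (∫ ω, N X C (K:ℝ) T 0 ω ∂μ) := by
      have hle : ∀ n, ∫⁻ ω, ENNReal.ofReal (N X C (K:ℝ) T n ω) ∂μ
          ≤ ENNReal.ofReal (∫ ω, N X C (K:ℝ) T 0 ω ∂μ) := by
        intro n
        rw [step5 n]
        exact ENNReal.ofReal_le_ofReal
          (integral_N_le hXadp hCadp hCpos hmono hnn hstep hK1 T n)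
      calc liminf (fun n => ∫⁻ ω, ENNReal.ofReal (N X C (K:ℝ) T n ω) ∂μ) atTop
          ≤ liminf (fun _ : ℕ => ENNReal.ofReal (∫ ω, N X C (K:ℝ) T 0 ω ∂μ)) atTop :=
            liminf_le_liminf (Eventually.of_forall hle)
        _ = ENNReal.ofReal (∫ ω, N X C (K:ℝ) T 0 ω ∂μ) := liminf_const _
    have chain : ENNReal.ofReal K * μ B ≤ ENNReal.ofReal (∫ ω, N X C (K:ℝ) T 0 ω ∂μ) := by
      rw [step1]
      exact le_trans step2 (le_trans step3 (le_trans step4 step6))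
    -- convert to real
    have hN0eq : ∫ ω, N X C (K:ℝ) T 0 ω ∂μ = ∫ ω, min (H C T (X T ω) ω) (K:ℝ) ∂μ := rfl
    have hfin : ENNReal.ofReal (∫ ω, N X C (K:ℝ) T 0 ω ∂μ) ≠ ⊤ := ENNReal.ofReal_ne_top
    have := ENNReal.toReal_mono hfin chain
    rw [ENNReal.toReal_mul, ENNReal.toReal_ofReal hK0] at this
    have hint_nonneg : 0 ≤ ∫ ω, N X C (K:ℝ) T 0 ω ∂μ := by
      apply integral_nonneg_of_ae
      filter_upwards [bddN_ae (T := T) hCpos hK0 0] with ω hω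
      exact hω.1
    rw [ENNReal.toReal_ofReal hint_nonneg] at this
    rw [← hN0eq]
    exact this
  -- conclude by letting K → ∞
  by_contra hBne
  have hpos : 0 < (μ B).toReal := ENNReal.toReal_pos hBne (measure_ne_top μ B)
  set ε := (μ B).toReal with hε
  -- dominated convergence
  have mH : Measurable[m0] fun ω => H C T (X T ω) ω :=
    measurable_comp_nat ((hXadp T).mono (𝓕.le T) le_rfl)
      (fun x => (measurable_H (fun j => (hCadp T j).mono (𝓕.le T) le_rfl) x))
  have hHnn : ∀ᵐ ω ∂μ, 0 ≤ H C T (X T ω) ω := by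
    filter_upwards [hCpos] with ω hω
    exact Finset.sum_nonneg fun j _ => one_div_nonneg.mpr (hω T j).le
  have hdct : Tendsto (fun K : ℕ => ∫ ω, min (H C T (X T ω) ω) ((K:ℝ)+1) / ((K:ℝ)+1) ∂μ)
      atTop (nhds 0) := by
    have h0 : (0:ℝ) = ∫ ω, (0:ℝ) ∂μ := by simp
    rw [h0]
    refine tendsto_integral_of_dominated_convergence (fun _ => (1:ℝ)) ?_ ?_ ?_ ?_
    · intro K
      exact ((mH.min measurable_const).div_const _).aestronglyMeasurable
    · exact integrable_const 1
    · intro K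
      filter_upwards [hHnn] with ω hω
      have hKpos : (0:ℝ) < (K:ℝ)+1 := by positivity
      rw [Real.norm_eq_abs, abs_div, abs_of_pos hKpos, div_le_one hKpos]
      rw [abs_of_nonneg (le_min hω (by positivity))]
      exact min_le_right _ _
    · filter_upwards [hHnn] with ω hω
      have hub : ∀ K : ℕ, min (H C T (X T ω) ω) ((K:ℝ)+1) / ((K:ℝ)+1)
          ≤ H C T (X T ω) ω / ((K:ℝ)+1) := by
        intro K
        have hKpos : (0:ℝ) < (K:ℝ)+1 := by positivity
        exact (div_le_div_iff_of_pos_right hKpos).mpr (min_le_left _ _)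
      have hlb : ∀ K : ℕ, (0:ℝ) ≤ min (H C T (X T ω) ω) ((K:ℝ)+1) / ((K:ℝ)+1) := by
        intro K
        have hKpos : (0:ℝ) < (K:ℝ)+1 := by positivity
        exact div_nonneg (le_min hω (by positivity)) hKpos.le
      have htop : Tendsto (fun K : ℕ => H C T (X T ω) ω / ((K:ℝ)+1)) atTop (nhds 0) := by
        have h1 := (tendsto_const_div_atTop_nhds_zero_nat (H C T (X T ω) ω)).comp
          (tendsto_add_atTop_nat 1)
        refine h1.congr fun K => ?_
        simp only [Function.comp_apply]
        push_cast
        ring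
      exact tendsto_of_tendsto_of_tendsto_of_le_of_le tendsto_const_nhds htop hlb hub
  -- finish
  have hfinal : ∀ K : ℕ, ε ≤ ∫ ω, min (H C T (X T ω) ω) ((K:ℝ)+1) / ((K:ℝ)+1) ∂μ := by
    intro K
    have h := key (K+1) (by omega)
    push_cast at h
    rw [integral_div]
    rw [le_div_iff₀ (show (0:ℝ) < (K:ℝ)+1 by positivity)]
    linarith [h]
  have hle0 : ε ≤ 0 := ge_of_tendsto hdct (Eventually.of_forall hfinal)
  linarith

end Main

end RWCEAux

open RWCEAux

/-- **RWCE on ℕ, monotone increasing, bounded above by a recurrent network.**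
A random walk in changing environment on ℕ: `X t` is the walker, `C t j` is the
(history-dependent) conductance of the edge `(j, j+1)` at time `t`.  The environment
is monotone increasing and bounded above by a fixed network `C∞` which is recurrent
(`∑ 1/C∞(j) = ∞`).  Then the walk visits `0` infinitely often almost surely. -/
theorem rwce_increasing_recurrent
    {Ω : Type*} {m0 : MeasurableSpace Ω} {μ : Measure Ω} [IsProbabilityMeasure μ]
    (𝓕 : Filtration ℕ m0)
    (X : ℕ → Ω → ℕ) (C : ℕ → ℕ → Ω → ℝ)
    (hXadp : ∀ t, Measurable[𝓕 t] (X t))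
    (hCadp : ∀ t j, Measurable[𝓕 t] (C t j))
    (hCpos : ∀ᵐ ω ∂μ, ∀ t j, 0 < C t j ω)
    (hmono : ∀ᵐ ω ∂μ, ∀ t j, C t j ω ≤ C (t + 1) j ω)
    (Cinf : ℕ → ℝ) (hCinfpos : ∀ j, 0 < Cinf j)
    (hbound : ∀ᵐ ω ∂μ, ∀ t j, C t j ω ≤ Cinf j)
    (hrec : ¬ Summable (fun j => 1 / Cinf j))
    (hnn : ∀ᵐ ω ∂μ, ∀ t, X (t + 1) ω = X t ω + 1 ∨ X (t + 1) ω + 1 = X t ω)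
    (hstep : ∀ t,
      μ[(fun ω => if X (t + 1) ω = X t ω + 1 then (1 : ℝ) else 0) | 𝓕 t]
        =ᵐ[μ] fun ω => if X t ω = 0 then 1
          else C t (X t ω) ω / (C t (X t ω) ω + C t (X t ω - 1) ω)) :
    ∀ᵐ ω ∂μ, {t | X t ω = 0}.Infinite := by
  classical
  have main : ∀ T : ℕ, ∀ᵐ ω ∂μ, ∃ t, T ≤ t ∧ X t ω = 0 := by
    intro T
    have hBnull := escape_null hXadp hCadp hCpos hmono hCinfpos hbound hrec hnn hstep T
    have hconvall : ∀ᵐ ω ∂μ, ∀ K : ℕ, 1 ≤ K →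
        ∃ c, Tendsto (fun n => N X C (K:ℝ) T n ω) atTop (nhds c) := by
      rw [ae_all_iff]
      intro K
      by_cases hK : 1 ≤ K
      · filter_upwards [N_tendsto_ae hXadp hCadp hCpos hmono hnn hstep
          (show (1:ℝ) ≤ (K:ℝ) by exact_mod_cast hK) T] with ω hω _
        exact hω
      · filter_upwards with ω h; exact absurd h hK
    have hP : ∀ᵐ ω ∂μ, ((∀ t j, 0 < C t j ω) ∧ (∀ t j, C t j ω ≤ C (t+1) j ω)
        ∧ (∀ t j, C t j ω ≤ Cinf j)
        ∧ (∀ t, X (t+1) ω = X t ω + 1 ∨ X (t+1) ω + 1 = X t ω)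
        ∧ (∀ K : ℕ, 1 ≤ K → ∃ c, Tendsto (fun n => N X C (K:ℝ) T n ω) atTop (nhds c))) := by
      filter_upwards [hCpos, hmono, hbound, hnn, hconvall] with ω a b c d e
      exact ⟨a, b, c, d, e⟩
    rw [ae_iff]
    refine measure_mono_null ?_ (measure_union_null (ae_iff.mp hP) hBnull)
    · intro ω hω
      simp only [Set.mem_setOf_eq] at hω
      by_cases hp : ((∀ t j, 0 < C t j ω) ∧ (∀ t j, C t j ω ≤ C (t+1) j ω)
          ∧ (∀ t j, C t j ω ≤ Cinf j)
          ∧ (∀ t, X (t+1) ω = X t ω + 1 ∨ X (t+1) ω + 1 = X t ω)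
          ∧ (∀ K : ℕ, 1 ≤ K → ∃ c, Tendsto (fun n => N X C (K:ℝ) T n ω) atTop (nhds c)))
      · right
        obtain ⟨h1, h2, h3, h4, h5⟩ := hp
        have hne : ∀ s, T ≤ s → X s ω ≠ 0 := by
          intro s hs h0; exact hω ⟨s, hs, h0⟩
        simp only [Set.mem_setOf_eq]
        refine ⟨hne, ?_⟩
        by_contra hnt
        exact oscillation h1 h2 h3 hCinfpos h4 hne hnt h5
      · left; exact hp
  have main' := ae_all_iff.mpr main
  filter_upwards [main'] with ω hω
  have : ∃ᶠ t in atTop, X t ω = 0 := by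
    rw [frequently_atTop]
    exact fun a => (hω a).imp fun t ht => ⟨ht.1, ht.2⟩
  rwa [Nat.frequently_atTop_iff_infinite] at this
end

section
/- Consider a monotone decreasing adaptive RWCE on ℕ (C_{t+1} ≤ C_t a.s.) whose conductances are bounded below by a transient network C_∞ (∑_j 1/C_∞(j) < ∞). Then the walk is transient: it visits every vertex only finitely many times almost surely. -/
open MeasureTheory Filter Topology

lemma rwce_det_core (c : ℕ → ℕ → ℝ) (Cinf : ℕ → ℝ) (hCinfpos : ∀ j, 0 < Cinf j)
    (htrans : Summable (fun j => 1 / Cinf j))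
    (hmono : ∀ t j, c (t + 1) j ≤ c t j) (hbound : ∀ t j, Cinf j ≤ c t j)
    (x : ℕ → ℕ) (hnn : ∀ t, x (t + 1) = x t + 1 ∨ x (t + 1) + 1 = x t)
    (L : ℝ)
    (hG : Tendsto (fun t => ∑ j ∈ Finset.range (x t), 1 / c t j) atTop (𝓝 L)) :
    ∀ v, {t | x t = v}.Finite := by
  have hpos : ∀ t j, 0 < c t j := fun t j => (hCinfpos j).trans_le (hbound t j)
  set f : ℕ → ℕ → ℝ := fun t j => 1 / c t j with hf
  have hfpos : ∀ t j, 0 < f t j := fun t j => one_div_pos.2 (hpos t j)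
  have hfle : ∀ t j, f t j ≤ 1 / Cinf j :=
    fun t j => one_div_le_one_div_of_le (hCinfpos j) (hbound t j)
  have hfstep : ∀ t j, f t j ≤ f (t + 1) j :=
    fun t j => one_div_le_one_div_of_le (hpos (t + 1) j) (hmono t j)
  have hsum : ∀ t, Summable (f t) := fun t =>
    Summable.of_nonneg_of_le (fun j => (hfpos t j).le) (fun j => hfle t j) htrans
  set h : ℕ → ℝ := fun t => ∑' j, f t j with hh
  have hhmono : Monotone h := monotone_nat_of_le_succ fun t =>
    Summable.tsum_le_tsum (fun j => hfstep t j) (hsum t) (hsum (t + 1))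
  have hhbdd : BddAbove (Set.range h) := by
    refine ⟨∑' j, 1 / Cinf j, ?_⟩
    rintro y ⟨t, rfl⟩
    exact Summable.tsum_le_tsum (fun j => hfle t j) (hsum t) htrans
  have hhconv : Tendsto h atTop (𝓝 (⨆ t, h t)) := tendsto_atTop_ciSup hhmono hhbdd
  -- increments of h tend to 0
  have hdh : Tendsto (fun t => h (t + 1) - h t) atTop (𝓝 0) := by
    have h1 : Tendsto (fun t => h (t + 1)) atTop (𝓝 (⨆ t, h t)) :=
      hhconv.comp (tendsto_add_atTop_nat 1)
    simpa using h1.sub hhconv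
  set G : ℕ → ℝ := fun t => ∑ j ∈ Finset.range (x t), f t j with hGdef
  have hdG : Tendsto (fun t => G (t + 1) - G t) atTop (𝓝 0) := by
    have h1 : Tendsto (fun t => G (t + 1)) atTop (𝓝 L) := hG.comp (tendsto_add_atTop_nat 1)
    simpa using h1.sub hG
  -- key step bounds
  have hA : ∀ t n, (0:ℝ) ≤ ∑ j ∈ Finset.range n, (f (t + 1) j - f t j) :=
    fun t n => Finset.sum_nonneg fun j _ => sub_nonneg.2 (hfstep t j)
  have hAle : ∀ t n, ∑ j ∈ Finset.range n, (f (t + 1) j - f t j) ≤ h (t + 1) - h t := by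
    intro t n
    have hs : Summable (fun j => f (t + 1) j - f t j) := (hsum (t + 1)).sub (hsum t)
    have := Summable.sum_le_tsum (Finset.range n) (fun j _ => sub_nonneg.2 (hfstep t j)) hs
    calc ∑ j ∈ Finset.range n, (f (t + 1) j - f t j)
        ≤ ∑' j, (f (t + 1) j - f t j) := this
      _ = h (t + 1) - h t := Summable.tsum_sub (hsum (t + 1)) (hsum t)
  intro v
  by_contra hinf
  replace hinf : {t | x t = v}.Infinite := hinf
  have hsplit : {t | x t = v} ⊆ {t | x t = v ∧ x (t + 1) = v + 1} ∪
      {t | x t = v ∧ x (t + 1) + 1 = v} := by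
    intro t ht
    rcases hnn t with hu | hd
    · exact Or.inl ⟨ht, by rw [← ht]; exact hu⟩
    · exact Or.inr ⟨ht, by rw [← ht]; exact hd⟩
  have hfmono : ∀ j, Monotone fun t => f t j :=
    fun j => monotone_nat_of_le_succ fun t => hfstep t j
  rcases Set.infinite_union.1 (hinf.mono hsplit) with hup | hdn
  · -- infinitely many up-steps from v
    set ε := f 0 v with hε
    have hεpos : 0 < ε := hfpos 0 v
    obtain ⟨T, hT⟩ := (Metric.tendsto_atTop.1 hdG) ε hεpos
    obtain ⟨t, ⟨htv, htu⟩, hTt⟩ := hup.exists_gt T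
    have hd : ε ≤ G (t + 1) - G t := by
      have hG1 : G (t + 1) = ∑ j ∈ Finset.range v, f (t + 1) j + f (t + 1) v := by
        show ∑ j ∈ Finset.range (x (t + 1)), f (t + 1) j = _
        rw [htu, Finset.sum_range_succ]
      have hG0 : G t = ∑ j ∈ Finset.range v, f t j := by
        show ∑ j ∈ Finset.range (x t), f t j = _
        rw [htv]
      have h1 : ∑ j ∈ Finset.range v, f t j ≤ ∑ j ∈ Finset.range v, f (t + 1) j :=
        Finset.sum_le_sum fun j _ => hfstep t j
      have hstep0 : f 0 v ≤ f (t + 1) v := hfmono v (Nat.zero_le _)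
      rw [hG1, hG0]
      linarith
    have habs := hT t hTt.le
    rw [Real.dist_eq, sub_zero] at habs
    linarith [(abs_lt.1 habs).2]
  · -- infinitely many down-steps from v
    obtain ⟨t0, ⟨_, ht0⟩, _⟩ := hdn.exists_gt 0
    obtain ⟨w, rfl⟩ : ∃ w, v = w + 1 := ⟨x (t0 + 1), ht0.symm⟩
    set ε := f 0 w with hε
    have hεpos : 0 < ε := hfpos 0 w
    obtain ⟨T1, hT1⟩ := (Metric.tendsto_atTop.1 hdG) (ε / 2) (by linarith)
    obtain ⟨T2, hT2⟩ := (Metric.tendsto_atTop.1 hdh) (ε / 2) (by linarith)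
    obtain ⟨t, ⟨htv, htd⟩, hTt⟩ := hdn.exists_gt (max T1 T2)
    have hxt1 : x (t + 1) = w := by omega
    have hdle : G (t + 1) - G t ≤ (h (t + 1) - h t) - ε := by
      have hG1 : G (t + 1) = ∑ j ∈ Finset.range w, f (t + 1) j := by
        show ∑ j ∈ Finset.range (x (t + 1)), f (t + 1) j = _
        rw [hxt1]
      have hG0 : G t = ∑ j ∈ Finset.range w, f t j + f t w := by
        show ∑ j ∈ Finset.range (x t), f t j = _
        rw [htv, Finset.sum_range_succ]
      have hA2 : ∑ j ∈ Finset.range w, (f (t + 1) j - f t j) ≤ h (t + 1) - h t := hAle t w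
      have hstep0 : f 0 w ≤ f t w := hfmono w (Nat.zero_le _)
      have hsub : ∑ j ∈ Finset.range w, (f (t + 1) j - f t j) =
          ∑ j ∈ Finset.range w, f (t + 1) j - ∑ j ∈ Finset.range w, f t j :=
        Finset.sum_sub_distrib _ _
      rw [hG1, hG0, hε]
      linarith
    have h1 := hT1 t (le_trans (le_max_left T1 T2) hTt.le)
    have h2 := hT2 t (le_trans (le_max_right T1 T2) hTt.le)
    rw [Real.dist_eq, sub_zero] at h1 h2
    linarith [(abs_lt.1 h1).1, (abs_lt.1 h2).2]

open MeasureTheory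

lemma meas_comp_nat {Ω : Type*} {m : MeasurableSpace Ω} {x : Ω → ℕ} (hx : Measurable x)
    {f : ℕ → Ω → ℝ} (hf : ∀ n, Measurable (f n)) : Measurable fun ω => f (x ω) ω := by
  have h : Measurable fun q : Ω × ℕ => f q.2 q.1 :=
    measurable_from_prod_countable_left fun n => hf n
  exact h.comp (measurable_id.prodMk hx)

/-- **RWCE on ℕ, monotone decreasing, bounded below by a transient network.**
Then the walk visits every vertex only finitely many times almost surely. -/
theorem rwce_decreasing_transient
    {Ω : Type*} {m0 : MeasurableSpace Ω} {μ : Measure Ω} [IsProbabilityMeasure μ]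
    (𝓕 : Filtration ℕ m0)
    (X : ℕ → Ω → ℕ) (C : ℕ → ℕ → Ω → ℝ)
    (hXadp : ∀ t, Measurable[𝓕 t] (X t))
    (hCadp : ∀ t j, Measurable[𝓕 t] (C t j))
    (hmono : ∀ᵐ ω ∂μ, ∀ t j, C (t + 1) j ω ≤ C t j ω)
    (Cinf : ℕ → ℝ) (hCinfpos : ∀ j, 0 < Cinf j)
    (hbound : ∀ᵐ ω ∂μ, ∀ t j, Cinf j ≤ C t j ω)
    (htrans : Summable (fun j => 1 / Cinf j))
    (hnn : ∀ᵐ ω ∂μ, ∀ t, X (t + 1) ω = X t ω + 1 ∨ X (t + 1) ω + 1 = X t ω)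
    (hstep : ∀ t,
      μ[(fun ω => if X (t + 1) ω = X t ω + 1 then (1 : ℝ) else 0) | 𝓕 t]
        =ᵐ[μ] fun ω => if X t ω = 0 then 1
          else C t (X t ω) ω / (C t (X t ω) ω + C t (X t ω - 1) ω)) :
    ∀ᵐ ω ∂μ, ∀ v, {t | X t ω = v}.Finite := by
  classical
  set K := ∑' j, 1 / Cinf j with hKdef
  have hK0 : ∀ j, (0:ℝ) < 1 / Cinf j := fun j => one_div_pos.2 (hCinfpos j)
  have hKle : ∀ j, 1 / Cinf j ≤ K := fun j => Summable.le_tsum htrans j fun b _ => (hK0 b).le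
  have hKpos : (0:ℝ) < K := lt_of_lt_of_le (hK0 0) (hKle 0)
  set G : ℕ → Ω → ℝ := fun t ω => ∑ j ∈ Finset.range (X t ω), 1 / C t j ω with hGdef
  -- measurability
  have hGmeas : ∀ t, Measurable[𝓕 t] (G t) := fun t =>
    meas_comp_nat (hXadp t)
      (fun n => Finset.measurable_sum _ fun j _ => measurable_const.div (hCadp t j))
  have hGm0 : ∀ t, Measurable (G t) := fun t => (hGmeas t).mono (𝓕.le t) le_rfl
  -- a.e. bound for G
  have hGbd : ∀ᵐ ω ∂μ, ∀ t, ‖G t ω‖ ≤ K := by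
    filter_upwards [hbound] with ω hb
    intro t
    have hnn' : ∀ j, (0:ℝ) ≤ 1 / C t j ω := fun j =>
      le_of_lt (one_div_pos.2 ((hCinfpos j).trans_le (hb t j)))
    have h1 : G t ω ≤ ∑ j ∈ Finset.range (X t ω), 1 / Cinf j :=
      Finset.sum_le_sum fun j _ => one_div_le_one_div_of_le (hCinfpos j) (hb t j)
    have h2 : ∑ j ∈ Finset.range (X t ω), 1 / Cinf j ≤ K :=
      Summable.sum_le_tsum _ (fun j _ => (hK0 j).le) htrans
    have h0 : 0 ≤ G t ω := Finset.sum_nonneg fun j _ => hnn' j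
    rw [Real.norm_eq_abs, abs_of_nonneg h0]
    exact h1.trans h2
  have hGint : ∀ t, Integrable (G t) μ := fun t =>
    memLp_one_iff_integrable.1 <|
      MemLp.of_bound (hGm0 t).aestronglyMeasurable K (hGbd.mono fun ω h => h t)
  -- the submartingale property
  have hsubm : Submartingale G 𝓕 μ := by
    refine submartingale_nat (fun t => (hGmeas t).stronglyMeasurable) hGint fun t => ?_
    set I : Ω → ℝ := fun ω => if X (t + 1) ω = X t ω + 1 then (1:ℝ) else 0 with hIdef
    set p : Ω → ℝ := fun ω => if X t ω = 0 then (1:ℝ)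
      else C t (X t ω) ω / (C t (X t ω) ω + C t (X t ω - 1) ω) with hpdef
    set a : Ω → ℝ := fun ω => 1 / C t (X t ω) ω with hadef
    set b : Ω → ℝ := fun ω => if X t ω = 0 then 0 else 1 / C t (X t ω - 1) ω with hbdef
    -- measurability of the pieces
    have hameas : Measurable[𝓕 t] a :=
      meas_comp_nat (hXadp t) fun n => measurable_const.div (hCadp t n)
    have hbmeas : Measurable[𝓕 t] b := by
      refine meas_comp_nat (x := fun ω => X t ω)
        (f := fun n ω => if n = 0 then 0 else 1 / C t (n - 1) ω) (hXadp t) fun n => ?_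
      cases n with
      | zero =>
          show Measurable[𝓕 t] fun ω : Ω => if (0:ℕ) = 0 then (0:ℝ) else 1 / C t (0 - 1) ω
          simp only [if_pos rfl]
          exact (measurable_const : Measurable[𝓕 t] fun _ : Ω => (0:ℝ))
      | succ m =>
          simp only [Nat.add_one_ne_zero, if_false, Nat.add_sub_cancel]
          exact measurable_const.div (hCadp t m)
    have ham0 : Measurable a := hameas.mono (𝓕.le t) le_rfl
    have hbm0 : Measurable b := hbmeas.mono (𝓕.le t) le_rfl
    have hIm0 : Measurable I := by
      have hset : MeasurableSet {ω | X (t + 1) ω = X t ω + 1} :=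
        measurableSet_eq_fun ((hXadp (t + 1)).mono (𝓕.le (t + 1)) le_rfl)
          (((hXadp t).mono (𝓕.le t) le_rfl).add measurable_const)
      have : I = Set.indicator {ω | X (t + 1) ω = X t ω + 1} (fun _ => (1:ℝ)) := by
        ext ω; by_cases h : X (t + 1) ω = X t ω + 1 <;> simp [hIdef, h]
      rw [this]
      exact (measurable_const.indicator hset)
    -- a.e. bounds for the pieces
    have habd : ∀ᵐ ω ∂μ, ‖a ω‖ ≤ K := by
      filter_upwards [hbound] with ω hb
      have hp : 0 < C t (X t ω) ω := (hCinfpos _).trans_le (hb t _)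
      rw [Real.norm_eq_abs, abs_of_nonneg (by positivity)]
      exact (one_div_le_one_div_of_le (hCinfpos _) (hb t _)).trans (hKle _)
    have hbbd : ∀ᵐ ω ∂μ, ‖b ω‖ ≤ K := by
      filter_upwards [hbound] with ω hb
      by_cases h : X t ω = 0
      · simp [hbdef, h, hKpos.le]
      · simp only [hbdef, h, if_false]
        have hp : 0 < C t (X t ω - 1) ω := (hCinfpos _).trans_le (hb t _)
        rw [Real.norm_eq_abs, abs_of_nonneg (by positivity)]
        exact (one_div_le_one_div_of_le (hCinfpos _) (hb t _)).trans (hKle _)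
    have hIbd : ∀ ω, ‖I ω‖ ≤ 1 := by
      intro ω; by_cases h : X (t + 1) ω = X t ω + 1 <;> simp [hIdef, h]
    have haint : Integrable a μ :=
      memLp_one_iff_integrable.1 <| MemLp.of_bound ham0.aestronglyMeasurable K habd
    have hbint : Integrable b μ :=
      memLp_one_iff_integrable.1 <| MemLp.of_bound hbm0.aestronglyMeasurable K hbbd
    have hIint : Integrable I μ :=
      memLp_one_iff_integrable.1 <| MemLp.of_bound hIm0.aestronglyMeasurable 1
        (Eventually.of_forall hIbd)
    have hφint : Integrable ((a + b) * I) μ := by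
      refine memLp_one_iff_integrable.1 <| MemLp.of_bound
        (((ham0.add hbm0).mul hIm0).aestronglyMeasurable) (2 * K) ?_
      filter_upwards [habd, hbbd] with ω h1 h2
      calc ‖(a ω + b ω) * I ω‖ = ‖a ω + b ω‖ * ‖I ω‖ := norm_mul _ _
        _ ≤ (K + K) * 1 := by
            gcongr
            · exact (norm_add_le _ _).trans (by gcongr)
            · exact hIbd ω
        _ = 2 * K := by ring
    -- pointwise key inequality
    have hkey : (G t + (a + b) * I - b) ≤ᵐ[μ] G (t + 1) := by
      filter_upwards [hmono, hbound, hnn] with ω hmo hbd hn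
      have hCpos : ∀ s j, 0 < C s j ω := fun s j => (hCinfpos j).trans_le (hbd s j)
      have hstep1 : ∀ j, 1 / C t j ω ≤ 1 / C (t + 1) j ω := fun j =>
        one_div_le_one_div_of_le (hCpos (t + 1) j) (hmo t j)
      have hle : ∑ j ∈ Finset.range (X (t + 1) ω), 1 / C t j ω ≤ G (t + 1) ω :=
        Finset.sum_le_sum fun j _ => hstep1 j
      simp only [Pi.add_apply, Pi.sub_apply, Pi.mul_apply]
      rcases hn t with hu | hd
      · have hI1 : I ω = 1 := if_pos hu
        have hs : ∑ j ∈ Finset.range (X (t + 1) ω), 1 / C t j ω = G t ω + a ω := by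
          rw [hu, Finset.sum_range_succ]
        have hprod : (a ω + b ω) * I ω = a ω + b ω := by rw [hI1]; ring
        linarith [hle, hs.symm.le, hs.le, hprod.le, hprod.symm.le]
      · have hne : X t ω ≠ 0 := by omega
        have hI0 : I ω = 0 := if_neg (by omega)
        have hbv : b ω = 1 / C t (X t ω - 1) ω := if_neg hne
        have hsum : G t ω = ∑ j ∈ Finset.range (X (t + 1) ω), 1 / C t j ω
            + 1 / C t (X (t + 1) ω) ω := by
          show ∑ j ∈ Finset.range (X t ω), 1 / C t j ω = _
          rw [← hd, Finset.sum_range_succ]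
        have hx1 : X (t + 1) ω = X t ω - 1 := by omega
        have hbv' : 1 / C t (X (t + 1) ω) ω = b ω := by rw [hbv, hx1]
        have hprod : (a ω + b ω) * I ω = 0 := by rw [hI0]; ring
        linarith [hle, hsum.le, hsum.symm.le, hbv'.le, hbv'.symm.le, hprod.le, hprod.symm.le]
    -- conditional expectation computation
    have hGcond : μ[G t | 𝓕 t] = G t :=
      condExp_of_stronglyMeasurable (𝓕.le t) (hGmeas t).stronglyMeasurable (hGint t)
    have hbcond : μ[b | 𝓕 t] = b :=
      condExp_of_stronglyMeasurable (𝓕.le t) hbmeas.stronglyMeasurable hbint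
    have hmul : μ[(a + b) * I | 𝓕 t] =ᵐ[μ] (a + b) * μ[I | 𝓕 t] := by
      refine condExp_stronglyMeasurable_mul_of_bound (𝓕.le t)
        ((hameas.add hbmeas).stronglyMeasurable) hIint (2 * K) ?_
      filter_upwards [habd, hbbd] with ω h1 h2
      calc ‖a ω + b ω‖ ≤ ‖a ω‖ + ‖b ω‖ := norm_add_le _ _
        _ ≤ 2 * K := by linarith
    have hIcond : μ[I | 𝓕 t] =ᵐ[μ] p := hstep t
    -- the drift is nonnegative
    have hdrift : ∀ᵐ ω ∂μ, G t ω ≤ G t ω + (a ω + b ω) * p ω - b ω := by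
      filter_upwards [hbound] with ω hb
      by_cases h : X t ω = 0
      · have hp1 : p ω = 1 := if_pos h
        have hb0 : b ω = 0 := if_pos h
        have hapos : 0 < C t (X t ω) ω := (hCinfpos _).trans_le (hb t _)
        have : 0 ≤ a ω := le_of_lt (by show (0:ℝ) < 1 / C t (X t ω) ω; positivity)
        rw [hp1, hb0]; linarith
      · have hppos : 0 < C t (X t ω) ω := (hCinfpos _).trans_le (hb t _)
        have hqpos : 0 < C t (X t ω - 1) ω := (hCinfpos _).trans_le (hb t _)
        have hpv : p ω = C t (X t ω) ω / (C t (X t ω) ω + C t (X t ω - 1) ω) := if_neg h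
        have hbv : b ω = 1 / C t (X t ω - 1) ω := if_neg h
        have hav : a ω = 1 / C t (X t ω) ω := rfl
        have heq : (a ω + b ω) * p ω - b ω = 0 := by
          rw [hpv, hbv, hav]
          field_simp
          ring
        linarith
    -- put it together
    calc G t ≤ᵐ[μ] (fun ω => G t ω + (a ω + b ω) * p ω - b ω) := hdrift
      _ =ᵐ[μ] μ[G t + (a + b) * I - b | 𝓕 t] := by
          have h1 : μ[G t + (a + b) * I - b | 𝓕 t]
              =ᵐ[μ] μ[G t + (a + b) * I | 𝓕 t] - μ[b | 𝓕 t] :=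
            condExp_sub ((hGint t).add hφint) hbint (𝓕 t)
          have h2 : μ[G t + (a + b) * I | 𝓕 t] =ᵐ[μ] μ[G t | 𝓕 t] + μ[(a + b) * I | 𝓕 t] :=
            condExp_add (hGint t) hφint (𝓕 t)
          filter_upwards [h1, h2, hmul, hIcond] with ω e1 e2 e5 e6
          have e3 := congrFun hGcond ω
          have e4 := congrFun hbcond ω
          simp only [Pi.add_apply, Pi.sub_apply, Pi.mul_apply] at *
          rw [e1, e2, e3, e4, e5, e6]
      _ ≤ᵐ[μ] μ[G (t + 1) | 𝓕 t] :=
          condExp_mono (((hGint t).add hφint).sub hbint) (hGint (t + 1)) hkey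
  -- convergence of the submartingale
  have hbdd : ∀ n, eLpNorm (G n) 1 μ ≤ K.toNNReal := by
    intro n
    have h := eLpNorm_le_of_ae_bound (p := 1) (μ := μ) (hGbd.mono fun ω h => h n)
    simpa [measure_univ, ENNReal.ofReal] using h
  have hconv := hsubm.exists_ae_tendsto_of_bdd hbdd
  -- conclude
  filter_upwards [hmono, hbound, hnn, hconv] with ω h1 h2 h3 hc
  obtain ⟨L, hL⟩ := hc
  exact rwce_det_core (fun t j => C t j ω) Cinf hCinfpos htrans (fun t j => h1 t j)
    (fun t j => h2 t j) (fun t => X t ω) h3 L hL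
end

section
/- Consider the nonadaptive, monotone decreasing RWCE on ℕ with conductances C_t(j) = 2^{-j} for j < t and C_t(j) = 1 for j ≥ t. Then with positive probability the walk moves right at every step (so never returns to 0), and with positive probability the walk returns to 0 infinitely often; hence the walk is of mixed type (neither recurrent nor transient in the a.s. sense). -/
open MeasureTheory Filter

/-- The decreasing "wave" environment on ℕ: the edge `(j, j+1)` has conductance `2⁻ʲ`
at times `t > j` and conductance `1` at times `t ≤ j`. -/
noncomputable def decWaveCond (t j : ℕ) : ℝ := if j < t then (2 : ℝ)⁻¹ ^ j else 1

namespace RWCEAux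

variable {Ω : Type*} {m0 : MeasurableSpace Ω} {μ : Measure Ω} [IsProbabilityMeasure μ]
  {𝓕 : Filtration ℕ m0} {X : ℕ → Ω → ℕ}

lemma measX (hXadp : ∀ t, Measurable[𝓕 t] (X t)) (t : ℕ) : Measurable (X t) :=
  (hXadp t).mono (𝓕.le t) le_rfl

lemma measR (hXadp : ∀ t, Measurable[𝓕 t] (X t)) (t : ℕ) :
    MeasurableSet {ω | X (t + 1) ω = X t ω + 1} :=
  measurableSet_eq_fun (measX hXadp (t + 1))
    ((measurable_from_top (α := ℕ) (f := (· + 1))).comp (measX hXadp t))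

lemma measR' (hXadp : ∀ t, Measurable[𝓕 t] (X t)) (t : ℕ) :
    MeasurableSet[𝓕 (t + 1)] {ω | X (t + 1) ω = X t ω + 1} :=
  measurableSet_eq_fun (m := 𝓕 (t + 1)) (hXadp (t + 1))
    ((measurable_from_top (α := ℕ) (f := (· + 1))).comp
      ((hXadp t).mono (𝓕.mono (Nat.le_succ t)) le_rfl))

lemma intf (hXadp : ∀ t, Measurable[𝓕 t] (X t)) (t : ℕ) :
    Integrable (fun ω => if X (t + 1) ω = X t ω + 1 then (1 : ℝ) else 0) μ := by
  have : (fun ω => if X (t + 1) ω = X t ω + 1 then (1 : ℝ) else 0)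
      = Set.indicator {ω | X (t + 1) ω = X t ω + 1} (fun _ => (1 : ℝ)) := by
    funext ω; simp [Set.indicator_apply, Set.mem_setOf_eq]
  rw [this]
  exact (integrable_const 1).indicator (measR hXadp t)

/-- Fundamental identity: if the step-probability function is a.e. constant `c` on a
`𝓕 t`-measurable set `A`, then `μ(A ∩ {right step at t}) = c * μ A`. -/
lemma key (hXadp : ∀ t, Measurable[𝓕 t] (X t))
    (hstep : ∀ t,
      μ[(fun ω => if X (t + 1) ω = X t ω + 1 then (1 : ℝ) else 0) | 𝓕 t]
        =ᵐ[μ] fun ω => if X t ω = 0 then 1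
          else decWaveCond t (X t ω) / (decWaveCond t (X t ω) + decWaveCond t (X t ω - 1)))
    (t : ℕ) (A : Set Ω) (hA : MeasurableSet[𝓕 t] A) (c : ℝ)
    (hc : ∀ᵐ ω ∂μ, ω ∈ A → (if X t ω = 0 then (1 : ℝ)
      else decWaveCond t (X t ω) / (decWaveCond t (X t ω) + decWaveCond t (X t ω - 1))) = c) :
    (μ (A ∩ {ω | X (t + 1) ω = X t ω + 1})).toReal = c * (μ A).toReal := by
  have hAm : MeasurableSet A := 𝓕.le t A hA
  have h1 : ∫ ω in A, (μ[(fun ω => if X (t + 1) ω = X t ω + 1 then (1 : ℝ) else 0) | 𝓕 t]) ω ∂μ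
      = ∫ ω in A, (if X (t + 1) ω = X t ω + 1 then (1 : ℝ) else 0) ∂μ :=
    setIntegral_condExp (𝓕.le t) (intf hXadp t) hA
  have h2 : ∫ ω in A, (μ[(fun ω => if X (t + 1) ω = X t ω + 1 then (1 : ℝ) else 0) | 𝓕 t]) ω ∂μ
      = ∫ _ω in A, c ∂μ := by
    refine setIntegral_congr_ae hAm ?_
    filter_upwards [hstep t, hc] with ω h1 h2 hmem
    rw [h1]; exact h2 hmem
  have h3 : ∫ ω in A, (if X (t + 1) ω = X t ω + 1 then (1 : ℝ) else 0) ∂μ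
      = (μ (A ∩ {ω | X (t + 1) ω = X t ω + 1})).toReal := by
    have : (fun ω => if X (t + 1) ω = X t ω + 1 then (1 : ℝ) else 0)
        = Set.indicator {ω | X (t + 1) ω = X t ω + 1} (fun _ => (1 : ℝ)) := by
      funext ω; simp [Set.indicator_apply, Set.mem_setOf_eq]
    rw [this, setIntegral_indicator (measR hXadp t), setIntegral_const, smul_eq_mul, mul_one, measureReal_def]
  have h4 : ∫ _ω in A, c ∂μ = c * (μ A).toReal := by
    rw [setIntegral_const, smul_eq_mul, mul_comm, measureReal_def]
  rw [← h3, ← h1, h2, h4]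

lemma keyCompl (hXadp : ∀ t, Measurable[𝓕 t] (X t))
    (hstep : ∀ t,
      μ[(fun ω => if X (t + 1) ω = X t ω + 1 then (1 : ℝ) else 0) | 𝓕 t]
        =ᵐ[μ] fun ω => if X t ω = 0 then 1
          else decWaveCond t (X t ω) / (decWaveCond t (X t ω) + decWaveCond t (X t ω - 1)))
    (t : ℕ) (A : Set Ω) (hA : MeasurableSet[𝓕 t] A) (c : ℝ)
    (hc : ∀ᵐ ω ∂μ, ω ∈ A → (if X t ω = 0 then (1 : ℝ)
      else decWaveCond t (X t ω) / (decWaveCond t (X t ω) + decWaveCond t (X t ω - 1))) = c) :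
    (μ (A \ {ω | X (t + 1) ω = X t ω + 1})).toReal = (1 - c) * (μ A).toReal := by
  have hsplit : μ (A ∩ {ω | X (t + 1) ω = X t ω + 1}) + μ (A \ {ω | X (t + 1) ω = X t ω + 1})
      = μ A := measure_inter_add_diff A (measR hXadp t)
  have hk := key hXadp hstep t A hA c hc
  have e1 : μ (A ∩ {ω | X (t + 1) ω = X t ω + 1}) ≠ ⊤ := measure_ne_top μ _
  have e2 : μ (A \ {ω | X (t + 1) ω = X t ω + 1}) ≠ ⊤ := measure_ne_top μ _
  have := congrArg ENNReal.toReal hsplit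
  rw [ENNReal.toReal_add e1 e2, hk] at this
  linarith




/-- step prob. at the frontier `x = t ≥ 1`. -/
lemma gval_frontier (t : ℕ) (ht : 1 ≤ t) :
    decWaveCond t t / (decWaveCond t t + decWaveCond t (t - 1))
    = 1 / (1 + (2 : ℝ)⁻¹ ^ (t - 1)) := by
  have h1 : decWaveCond t t = 1 := by simp [decWaveCond]
  have h2 : decWaveCond t (t - 1) = (2 : ℝ)⁻¹ ^ (t - 1) := by
    have : t - 1 < t := by omega
    simp [decWaveCond, this]
  rw [h1, h2]

/-- step prob. strictly behind the wave: `0 < x < t` gives `1/3`. -/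
lemma gval_behind (t x : ℕ) (hx : 0 < x) (hxt : x < t) :
    decWaveCond t x / (decWaveCond t x + decWaveCond t (x - 1))
    = 1 / 3 := by
  have h1 : decWaveCond t x = (2 : ℝ)⁻¹ ^ x := by simp [decWaveCond, hxt]
  have h2 : decWaveCond t (x - 1) = (2 : ℝ)⁻¹ ^ (x - 1) := by
    have : x - 1 < t := by omega
    simp [decWaveCond, this]
  rw [h1, h2]
  obtain ⟨y, rfl⟩ : ∃ y, x = y + 1 := ⟨x - 1, by omega⟩
  have hp : (0 : ℝ) < (2 : ℝ)⁻¹ ^ y := by positivity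
  simp only [Nat.add_sub_cancel, pow_succ]
  field_simp
  ring

/-- frontier prob. lower bound. -/
lemma frontier_lb (t : ℕ) (ht : 1 ≤ t) :
    Real.exp (-(2 * (2 : ℝ)⁻¹ ^ t)) ≤ 1 / (1 + (2 : ℝ)⁻¹ ^ (t - 1)) := by
  have hx : (2 : ℝ) * (2 : ℝ)⁻¹ ^ t = (2 : ℝ)⁻¹ ^ (t - 1) := by
    obtain ⟨y, rfl⟩ : ∃ y, t = y + 1 := ⟨t - 1, by omega⟩
    simp [pow_succ]
    ring
  rw [hx]
  set a : ℝ := (2 : ℝ)⁻¹ ^ (t - 1) with ha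
  have hap : (0 : ℝ) < a := by positivity
  have h1 : 1 + a ≤ Real.exp a := by
    have := Real.add_one_le_exp a; linarith
  rw [Real.exp_neg]
  have h2 : (0 : ℝ) < 1 + a := by linarith
  rw [div_eq_mul_inv, one_mul]
  exact inv_anti₀ h2 h1





/-- the all-right-up-to-n events -/
def An (X : ℕ → Ω → ℕ) (n : ℕ) : Set Ω := {ω | ∀ t, t < n → X (t + 1) ω = X t ω + 1}

lemma measR'' (hXadp : ∀ t, Measurable[𝓕 t] (X t)) (t n : ℕ) (h : t < n) :
    MeasurableSet[𝓕 n] {ω | X (t + 1) ω = X t ω + 1} :=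
  measurableSet_eq_fun (m := 𝓕 n)
    ((hXadp (t + 1)).mono (𝓕.mono (by omega)) le_rfl)
    ((measurable_from_top (α := ℕ) (f := (· + 1))).comp
      ((hXadp t).mono (𝓕.mono (by omega)) le_rfl))

lemma measAn (hXadp : ∀ t, Measurable[𝓕 t] (X t)) (n : ℕ) :
    MeasurableSet[𝓕 n] (An X n) := by
  have : An X n = ⋂ t, ⋂ (_ : t < n), {ω | X (t + 1) ω = X t ω + 1} := by
    ext ω; simp [An, Set.mem_iInter]
  rw [this]
  exact MeasurableSet.iInter fun t => MeasurableSet.iInter fun ht => measR'' hXadp t n ht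

lemma X_on_An (hX0 : ∀ ω, X 0 ω = 0) {n : ℕ} {ω : Ω} (hω : ω ∈ An X n) : X n ω = n := by
  induction n with
  | zero => exact hX0 ω
  | succ k ih =>
    have h1 : ω ∈ An X k := fun t ht => hω t (by omega)
    rw [hω k (by omega), ih h1]

lemma An_succ (n : ℕ) : An X (n + 1) = An X n ∩ {ω | X (n + 1) ω = X n ω + 1} := by
  ext ω
  constructor
  · exact fun h => ⟨fun t ht => h t (by omega), h n (by omega)⟩
  · rintro ⟨h1, h2⟩ t ht
    rcases Nat.lt_succ_iff_lt_or_eq.mp ht with h | h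
    · exact h1 t h
    · exact h ▸ h2

lemma geom_bound (n : ℕ) : ∑ t ∈ Finset.range n, 2 * (2 : ℝ)⁻¹ ^ t ≤ 4 := by
  rw [← Finset.mul_sum]
  have h : ∑ t ∈ Finset.range n, (2 : ℝ)⁻¹ ^ t ≤ 2 := by
    have := sum_geometric_two_le n
    simpa [one_div] using this
  linarith

lemma An_lb (hXadp : ∀ t, Measurable[𝓕 t] (X t)) (hX0 : ∀ ω, X 0 ω = 0)
    (hstep : ∀ t,
      μ[(fun ω => if X (t + 1) ω = X t ω + 1 then (1 : ℝ) else 0) | 𝓕 t]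
        =ᵐ[μ] fun ω => if X t ω = 0 then 1
          else decWaveCond t (X t ω) / (decWaveCond t (X t ω) + decWaveCond t (X t ω - 1)))
    (n : ℕ) :
    Real.exp (-(∑ t ∈ Finset.range n, 2 * (2 : ℝ)⁻¹ ^ t)) ≤ (μ (An X n)).toReal := by
  induction n with
  | zero =>
    simp only [Finset.range_zero, Finset.sum_empty, neg_zero, Real.exp_zero]
    have : An X 0 = Set.univ := by ext ω; simp [An]
    rw [this]; simp
  | succ k ih =>
    -- value of the step function on An k
    set c : ℝ := if k = 0 then 1 else 1 / (1 + (2 : ℝ)⁻¹ ^ (k - 1)) with hcdef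
    have hc : ∀ᵐ ω ∂μ, ω ∈ An X k → (if X k ω = 0 then (1 : ℝ)
        else decWaveCond k (X k ω) / (decWaveCond k (X k ω) + decWaveCond k (X k ω - 1))) = c := by
      filter_upwards with ω hω
      rw [X_on_An hX0 hω]
      rcases Nat.eq_zero_or_pos k with hk | hk
      · subst hk; simp [hcdef]
      · rw [hcdef, if_neg (by omega : ¬k = 0), if_neg (by omega : ¬k = 0), gval_frontier k hk]
    have hkey := key hXadp hstep k (An X k) (measAn hXadp k) c hc
    rw [An_succ, hkey]
    have hclb : Real.exp (-(2 * (2 : ℝ)⁻¹ ^ k)) ≤ c := by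
      rcases Nat.eq_zero_or_pos k with hk | hk
      · subst hk
        simp only [hcdef, if_pos rfl]
        have : (0:ℝ) < 2 * (2 : ℝ)⁻¹ ^ 0 := by positivity
        calc Real.exp (-(2 * (2 : ℝ)⁻¹ ^ 0)) ≤ Real.exp 0 := Real.exp_le_exp.mpr (by linarith)
          _ = 1 := Real.exp_zero
      · rw [hcdef, if_neg (by omega)]
        exact frontier_lb k hk
    calc Real.exp (-(∑ t ∈ Finset.range (k + 1), 2 * (2 : ℝ)⁻¹ ^ t))
        = Real.exp (-(2 * (2 : ℝ)⁻¹ ^ k)) * Real.exp (-(∑ t ∈ Finset.range k, 2 * (2 : ℝ)⁻¹ ^ t)) := by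
          rw [← Real.exp_add, Finset.sum_range_succ]
          congr 1
          ring
      _ ≤ c * (μ (An X k)).toReal := by
          apply mul_le_mul hclb ih (le_of_lt (Real.exp_pos _))
          exact le_trans (le_of_lt (Real.exp_pos _)) hclb

lemma part1 (hXadp : ∀ t, Measurable[𝓕 t] (X t)) (hX0 : ∀ ω, X 0 ω = 0)
    (hstep : ∀ t,
      μ[(fun ω => if X (t + 1) ω = X t ω + 1 then (1 : ℝ) else 0) | 𝓕 t]
        =ᵐ[μ] fun ω => if X t ω = 0 then 1
          else decWaveCond t (X t ω) / (decWaveCond t (X t ω) + decWaveCond t (X t ω - 1))) :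
    0 < μ {ω | ∀ t, X (t + 1) ω = X t ω + 1} := by
  have hiInter : {ω | ∀ t, X (t + 1) ω = X t ω + 1} = ⋂ n, An X n := by
    ext ω
    simp only [Set.mem_setOf_eq, Set.mem_iInter]
    exact ⟨fun h n t _ => h t, fun h t => h (t + 1) t (by omega)⟩
  have hmeas : ∀ n, NullMeasurableSet (An X n) μ :=
    fun n => ((𝓕.le n) _ (measAn hXadp n)).nullMeasurableSet
  have hanti : Antitone (An X) := fun a b hab => by
    intro ω hω t ht; exact hω t (by omega)
  have hlim : μ (⋂ n, An X n) = ⨅ n, μ (An X n) :=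
    Directed.measure_iInter hmeas (hanti.directed_ge) ⟨0, measure_ne_top μ _⟩
  rw [hiInter, hlim]
  have hbd : ∀ n, ENNReal.ofReal (Real.exp (-4)) ≤ μ (An X n) := by
    intro n
    have h1 : Real.exp (-4) ≤ (μ (An X n)).toReal := by
      refine le_trans ?_ (An_lb hXadp hX0 hstep n)
      apply Real.exp_le_exp.mpr
      linarith [geom_bound n]
    exact ENNReal.ofReal_le_of_le_toReal h1
  calc (0 : ENNReal) < ENNReal.ofReal (Real.exp (-4)) := by
        rw [ENNReal.ofReal_pos]; exact Real.exp_pos _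
    _ ≤ ⨅ n, μ (An X n) := le_iInf hbd


/-! ### Part 2 -/

def Ee (X : ℕ → Ω → ℕ) (N t : ℕ) : Set Ω :=
  {ω | X 2 ω = 0} ∩ {ω | ∀ s, N ≤ s → s ≤ t → X s ω ≠ 0}

def DD (X : ℕ → Ω → ℕ) (N : ℕ) : Set Ω :=
  {ω | X 2 ω = 0} ∩ {ω | ∀ s, N ≤ s → X s ω ≠ 0}

lemma DD_subset_Ee (N t : ℕ) : DD X N ⊆ Ee X N t :=
  fun ω ⟨h1, h2⟩ => ⟨h1, fun s hs _ => h2 s hs⟩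

lemma Ee_anti (N t : ℕ) : Ee X N (t + 1) ⊆ Ee X N t :=
  fun ω ⟨h1, h2⟩ => ⟨h1, fun s hs hst => h2 s hs (by omega)⟩

lemma measEe (hXadp : ∀ t, Measurable[𝓕 t] (X t)) (N t : ℕ) (ht : 2 ≤ t) :
    MeasurableSet[𝓕 t] (Ee X N t) := by
  apply MeasurableSet.inter
  · exact 𝓕.mono ht _ (hXadp 2 (measurableSet_singleton 0))
  · have : {ω | ∀ s, N ≤ s → s ≤ t → X s ω ≠ 0}
        = ⋂ s, ⋂ (_ : N ≤ s), ⋂ (_ : s ≤ t), {ω | X s ω ≠ 0} := by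
      ext ω; simp [Set.mem_iInter]
    rw [this]
    refine MeasurableSet.iInter fun s => MeasurableSet.iInter fun _ =>
      MeasurableSet.iInter fun hst => ?_
    exact (𝓕.mono hst _ (hXadp s (measurableSet_singleton 0))).compl

lemma hXb (hX0 : ∀ ω, X 0 ω = 0)
    (hnn : ∀ᵐ ω ∂μ, ∀ t, X (t + 1) ω = X t ω + 1 ∨ X (t + 1) ω + 1 = X t ω) :
    ∀ᵐ ω ∂μ, ∀ t, X t ω ≤ t := by
  filter_upwards [hnn] with ω hω
  intro t
  induction t with
  | zero => simp [hX0 ω]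
  | succ k ih => rcases hω k with h | h <;> omega

lemma intX (hXadp : ∀ t, Measurable[𝓕 t] (X t)) (hX0 : ∀ ω, X 0 ω = 0)
    (hnn : ∀ᵐ ω ∂μ, ∀ t, X (t + 1) ω = X t ω + 1 ∨ X (t + 1) ω + 1 = X t ω) (t : ℕ) :
    Integrable (fun ω => (X t ω : ℝ)) μ := by
  refine Integrable.mono' (integrable_const (t : ℝ))
    (((measurable_from_top (α := ℕ) (f := fun n => (n : ℝ))).comp
      (measX hXadp t)).aestronglyMeasurable) ?_
  filter_upwards [hXb hX0 hnn] with ω hω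
  have := hω t
  simp only [Function.comp, Real.norm_natCast]
  exact_mod_cast this

/-- integral of the right-step indicator over a set -/
lemma intfA (hXadp : ∀ t, Measurable[𝓕 t] (X t)) (t : ℕ) (A : Set Ω) :
    ∫ ω in A, (if X (t + 1) ω = X t ω + 1 then (1 : ℝ) else 0) ∂μ
      = (μ (A ∩ {ω | X (t + 1) ω = X t ω + 1})).toReal := by
  have : (fun ω => if X (t + 1) ω = X t ω + 1 then (1 : ℝ) else 0)
      = Set.indicator {ω | X (t + 1) ω = X t ω + 1} (fun _ => (1 : ℝ)) := by
    funext ω; simp [Set.indicator_apply, Set.mem_setOf_eq]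
  rw [this, setIntegral_indicator (measR hXadp t), setIntegral_const, smul_eq_mul, mul_one, measureReal_def]

lemma hBle (hX0 : ∀ ω, X 0 ω = 0)
    (hnn : ∀ᵐ ω ∂μ, ∀ t, X (t + 1) ω = X t ω + 1 ∨ X (t + 1) ω + 1 = X t ω) :
    ∀ᵐ ω ∂μ, X 2 ω = 0 → ∀ t, 2 ≤ t → X t ω + 2 ≤ t := by
  filter_upwards [hnn] with ω hω hB t ht
  induction t, ht using Nat.le_induction with
  | base => omega
  | succ k hk ih => rcases hω k with h | h <;> omega

lemma drift (hXadp : ∀ t, Measurable[𝓕 t] (X t)) (hX0 : ∀ ω, X 0 ω = 0)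
    (hnn : ∀ᵐ ω ∂μ, ∀ t, X (t + 1) ω = X t ω + 1 ∨ X (t + 1) ω + 1 = X t ω)
    (hstep : ∀ t,
      μ[(fun ω => if X (t + 1) ω = X t ω + 1 then (1 : ℝ) else 0) | 𝓕 t]
        =ᵐ[μ] fun ω => if X t ω = 0 then 1
          else decWaveCond t (X t ω) / (decWaveCond t (X t ω) + decWaveCond t (X t ω - 1)))
    (N t : ℕ) (hN : 2 ≤ N) (hNt : N ≤ t) :
    ∫ ω in Ee X N (t + 1), (X (t + 1) ω : ℝ) ∂μ
      ≤ ∫ ω in Ee X N t, (X t ω : ℝ) ∂μ - (1 / 3) * (μ (DD X N)).toReal := by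
  have htt : 2 ≤ t := le_trans hN hNt
  have hEFm : MeasurableSet[𝓕 t] (Ee X N t) := measEe hXadp N t htt
  have hEm : MeasurableSet (Ee X N t) := 𝓕.le t _ hEFm
  -- the step probability is 1/3 on `Ee X N t`
  have hc : ∀ᵐ ω ∂μ, ω ∈ Ee X N t → (if X t ω = 0 then (1 : ℝ)
      else decWaveCond t (X t ω) / (decWaveCond t (X t ω) + decWaveCond t (X t ω - 1)))
      = 1 / 3 := by
    filter_upwards [hBle hX0 hnn] with ω hb hmem
    have h0 : X t ω ≠ 0 := hmem.2 t hNt le_rfl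
    have hlt : X t ω < t := by have := hb hmem.1 t htt; omega
    rw [if_neg h0]
    exact gval_behind t (X t ω) (by omega) hlt
  have hkey := key hXadp hstep t (Ee X N t) hEFm (1 / 3) hc
  -- decomposition of `X (t+1)` on `Ee X N t`
  have hdecomp : ∀ᵐ ω ∂μ, ω ∈ Ee X N t →
      (X (t + 1) ω : ℝ)
        = (X t ω : ℝ) - 1 + 2 * (if X (t + 1) ω = X t ω + 1 then (1 : ℝ) else 0) := by
    filter_upwards [hnn] with ω hω hmem
    have h0 : X t ω ≠ 0 := hmem.2 t hNt le_rfl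
    rcases hω t with h | h
    · rw [if_pos h, h]; push_cast; ring
    · rw [if_neg (by omega)]
      have hc' : (X (t + 1) ω : ℝ) + 1 = (X t ω : ℝ) := by exact_mod_cast h
      linarith
  have hint1 : IntegrableOn (fun ω => (X t ω : ℝ) - 1) (Ee X N t) μ :=
    ((intX hXadp hX0 hnn t).sub (integrable_const 1)).integrableOn
  have hint2 : IntegrableOn
      (fun ω => 2 * (if X (t + 1) ω = X t ω + 1 then (1 : ℝ) else 0)) (Ee X N t) μ :=
    ((intf hXadp t).const_mul 2).integrableOn
  have hsplit : ∫ ω in Ee X N t, (X (t + 1) ω : ℝ) ∂μ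
      = (∫ ω in Ee X N t, (X t ω : ℝ) ∂μ - (μ (Ee X N t)).toReal)
        + 2 * (μ (Ee X N t ∩ {ω | X (t + 1) ω = X t ω + 1})).toReal := by
    rw [setIntegral_congr_ae hEm hdecomp, integral_add hint1 hint2]
    congr 1
    · rw [integral_sub (intX hXadp hX0 hnn t).integrableOn (integrable_const 1).integrableOn]
      simp [setIntegral_const]
      rfl
    · rw [integral_const_mul, intfA hXadp t]
  have hmono : ∫ ω in Ee X N (t + 1), (X (t + 1) ω : ℝ) ∂μ
      ≤ ∫ ω in Ee X N t, (X (t + 1) ω : ℝ) ∂μ := by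
    refine setIntegral_mono_set (intX hXadp hX0 hnn (t + 1)).integrableOn
      (Filter.Eventually.of_forall fun ω => by positivity)
      (Filter.Eventually.of_forall (Ee_anti N t))
  have hDE : (μ (DD X N)).toReal ≤ (μ (Ee X N t)).toReal :=
    ENNReal.toReal_mono (measure_ne_top μ _) (measure_mono (DD_subset_Ee N t))
  rw [hsplit, hkey] at hmono
  linarith

lemma drift_iter (hXadp : ∀ t, Measurable[𝓕 t] (X t)) (hX0 : ∀ ω, X 0 ω = 0)
    (hnn : ∀ᵐ ω ∂μ, ∀ t, X (t + 1) ω = X t ω + 1 ∨ X (t + 1) ω + 1 = X t ω)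
    (hstep : ∀ t,
      μ[(fun ω => if X (t + 1) ω = X t ω + 1 then (1 : ℝ) else 0) | 𝓕 t]
        =ᵐ[μ] fun ω => if X t ω = 0 then 1
          else decWaveCond t (X t ω) / (decWaveCond t (X t ω) + decWaveCond t (X t ω - 1)))
    (N : ℕ) (hN : 2 ≤ N) (k : ℕ) :
    ∫ ω in Ee X N (N + k), (X (N + k) ω : ℝ) ∂μ
      ≤ ∫ ω in Ee X N N, (X N ω : ℝ) ∂μ - k * ((1 / 3) * (μ (DD X N)).toReal) := by
  induction k with
  | zero => simp
  | succ m ih =>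
    have h := drift hXadp hX0 hnn hstep N (N + m) hN (by omega)
    have he : N + (m + 1) = (N + m) + 1 := by omega
    rw [he]
    push_cast
    linarith

lemma DD_null (hXadp : ∀ t, Measurable[𝓕 t] (X t)) (hX0 : ∀ ω, X 0 ω = 0)
    (hnn : ∀ᵐ ω ∂μ, ∀ t, X (t + 1) ω = X t ω + 1 ∨ X (t + 1) ω + 1 = X t ω)
    (hstep : ∀ t,
      μ[(fun ω => if X (t + 1) ω = X t ω + 1 then (1 : ℝ) else 0) | 𝓕 t]
        =ᵐ[μ] fun ω => if X t ω = 0 then 1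
          else decWaveCond t (X t ω) / (decWaveCond t (X t ω) + decWaveCond t (X t ω - 1)))
    (N : ℕ) (hN : 2 ≤ N) : μ (DD X N) = 0 := by
  by_contra h
  have hpos : 0 < (μ (DD X N)).toReal := ENNReal.toReal_pos h (measure_ne_top μ _)
  have hc3 : 0 < (1 / 3 : ℝ) * (μ (DD X N)).toReal := by positivity
  -- F N ≤ N
  have hFN : ∫ ω in Ee X N N, (X N ω : ℝ) ∂μ ≤ (N : ℝ) := by
    have h1 : ∫ ω in Ee X N N, (X N ω : ℝ) ∂μ ≤ ∫ _ω in Ee X N N, (N : ℝ) ∂μ := by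
      refine integral_mono_ae (intX hXadp hX0 hnn N).integrableOn
        (integrable_const _) ?_
      filter_upwards [ae_restrict_of_ae (hXb hX0 hnn)] with ω hω
      exact_mod_cast hω N
    have h2 : ∫ _ω in Ee X N N, (N : ℝ) ∂μ = (μ (Ee X N N)).toReal * N := by
      rw [setIntegral_const, smul_eq_mul, measureReal_def]
    have h3 : (μ (Ee X N N)).toReal ≤ 1 := by
      have := prob_le_one (μ := μ) (s := Ee X N N)
      calc (μ (Ee X N N)).toReal ≤ (1 : ENNReal).toReal :=
            ENNReal.toReal_mono (by simp) this
        _ = 1 := by simp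
    have h4 : (0 : ℝ) ≤ N := by positivity
    nlinarith
  obtain ⟨k, hk⟩ := exists_nat_gt ((N : ℝ) / ((1 / 3) * (μ (DD X N)).toReal))
  have hdi := drift_iter hXadp hX0 hnn hstep N hN k
  have hnonneg : 0 ≤ ∫ ω in Ee X N (N + k), (X (N + k) ω : ℝ) ∂μ :=
    integral_nonneg fun ω => by positivity
  rw [div_lt_iff₀ hc3] at hk
  linarith

lemma part2 (hXadp : ∀ t, Measurable[𝓕 t] (X t)) (hX0 : ∀ ω, X 0 ω = 0)
    (hnn : ∀ᵐ ω ∂μ, ∀ t, X (t + 1) ω = X t ω + 1 ∨ X (t + 1) ω + 1 = X t ω)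
    (hstep : ∀ t,
      μ[(fun ω => if X (t + 1) ω = X t ω + 1 then (1 : ℝ) else 0) | 𝓕 t]
        =ᵐ[μ] fun ω => if X t ω = 0 then 1
          else decWaveCond t (X t ω) / (decWaveCond t (X t ω) + decWaveCond t (X t ω - 1))) :
    0 < μ {ω | {t | X t ω = 0}.Infinite} := by
  set B : Set Ω := {ω | X 2 ω = 0} with hBdef
  set Z : Set Ω := {ω | {t | X t ω = 0}.Infinite} with hZdef
  -- μ {X 1 = 1} = 1
  have hX1 : μ {ω | X 1 ω = 1} = 1 := by
    have huniv : ∀ᵐ ω ∂μ, ω ∈ (Set.univ : Set Ω) → (if X 0 ω = 0 then (1 : ℝ)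
        else decWaveCond 0 (X 0 ω) / (decWaveCond 0 (X 0 ω) + decWaveCond 0 (X 0 ω - 1)))
        = 1 := Filter.Eventually.of_forall fun ω _ => if_pos (hX0 ω)
    have hk := key hXadp hstep 0 Set.univ MeasurableSet.univ 1 huniv
    rw [Set.univ_inter, measure_univ] at hk
    simp only [ENNReal.toReal_one, one_mul] at hk
    have hRB : {ω | X 1 ω = X 0 ω + 1} = {ω | X 1 ω = 1} := by
      ext ω; simp [hX0 ω]
    rw [hRB] at hk
    exact (ENNReal.toReal_eq_one_iff _).mp hk
  -- probability 1/2 of a left step at time 1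
  have hA1 : MeasurableSet[𝓕 1] {ω | X 1 ω = 1} :=
    hXadp 1 (measurableSet_singleton 1)
  have hc : ∀ᵐ ω ∂μ, ω ∈ {ω | X 1 ω = 1} → (if X 1 ω = 0 then (1 : ℝ)
      else decWaveCond 1 (X 1 ω) / (decWaveCond 1 (X 1 ω) + decWaveCond 1 (X 1 ω - 1)))
      = 1 / 2 := by
    refine Filter.Eventually.of_forall fun ω hω => ?_
    have h1 : X 1 ω = 1 := hω
    rw [h1]
    norm_num [decWaveCond]
  have hkc := keyCompl hXadp hstep 1 {ω | X 1 ω = 1} hA1 (1 / 2) hc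
  rw [hX1] at hkc
  simp only [ENNReal.toReal_one, mul_one] at hkc
  -- a left step at time 1 lands at 0
  have hsub : μ ({ω | X 1 ω = 1} \ {ω | X 2 ω = X 1 ω + 1}) ≤ μ B := by
    refine measure_mono_ae ?_
    filter_upwards [hnn] with ω hω
    intro hmem
    obtain ⟨h1, h2⟩ := hmem
    rcases hω 1 with h | h
    · exact absurd h h2
    · show X 2 ω = 0
      have h1' : X 1 ω = 1 := h1
      norm_num at h
      omega
  have hBpos : 0 < μ B := by
    rcases eq_or_lt_of_le (zero_le : (0 : ENNReal) ≤ μ ({ω | X 1 ω = 1} \ {ω | X 2 ω = X 1 ω + 1})) with he | hl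
    · exfalso
      rw [← he] at hkc
      norm_num at hkc
    · exact lt_of_lt_of_le hl hsub
  -- covering of B \ Z by the null sets DD
  have hcover : B \ Z ⊆ ⋃ N, DD X (N + 2) := by
    rintro ω ⟨hB, hZ⟩
    have hfin : {t | X t ω = 0}.Finite := Set.not_infinite.mp hZ
    obtain ⟨M, hM⟩ := hfin.bddAbove
    refine Set.mem_iUnion.mpr ⟨M, hB, fun s hs h0 => ?_⟩
    have := hM (show s ∈ {t | X t ω = 0} from h0)
    omega
  have hnull : μ (⋃ N, DD X (N + 2)) = 0 :=
    measure_iUnion_null fun N => DD_null hXadp hX0 hnn hstep (N + 2) (by omega)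
  have hdiff : μ (B \ Z) = 0 :=
    le_antisymm (le_trans (measure_mono hcover) hnull.le) zero_le
  have hle : μ B ≤ μ (B ∩ Z) + μ (B \ Z) := measure_le_inter_add_diff μ B Z
  rw [hdiff, add_zero] at hle
  exact lt_of_lt_of_le hBpos (le_trans hle (measure_mono Set.inter_subset_right))

end RWCEAux

/-- **Example 4.5:** the nonadaptive, monotone decreasing RWCE on ℕ with conductances
`C_t(j) = 2^{-j}` for `j < t` and `1` otherwise, started at `0`, is of mixed type:
with positive probability the walk moves right at every step (so never returns to `0`),
and with positive probability it returns to `0` infinitely often. -/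
theorem rwce_decwave_mixed
    {Ω : Type*} {m0 : MeasurableSpace Ω} {μ : Measure Ω} [IsProbabilityMeasure μ]
    (𝓕 : Filtration ℕ m0)
    (X : ℕ → Ω → ℕ)
    (hXadp : ∀ t, Measurable[𝓕 t] (X t))
    (hX0 : ∀ ω, X 0 ω = 0)
    (hnn : ∀ᵐ ω ∂μ, ∀ t, X (t + 1) ω = X t ω + 1 ∨ X (t + 1) ω + 1 = X t ω)
    (hstep : ∀ t,
      μ[(fun ω => if X (t + 1) ω = X t ω + 1 then (1 : ℝ) else 0) | 𝓕 t]
        =ᵐ[μ] fun ω => if X t ω = 0 then 1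
          else decWaveCond t (X t ω) / (decWaveCond t (X t ω) + decWaveCond t (X t ω - 1))) :
    0 < μ {ω | ∀ t, X (t + 1) ω = X t ω + 1} ∧
    0 < μ {ω | {t | X t ω = 0}.Infinite} :=
  ⟨RWCEAux.part1 hXadp hX0 hstep, RWCEAux.part2 hXadp hX0 hnn hstep⟩
end
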